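/- arXiv:2505.07727 — 4 statements merged into one kernel-verified Lean document; each statement's English description precedes it below -/
import Mathlib

section
/- Let G be a graph on n vertices with minimum degree δ(G) ≥ n − 3. Then oh(G) ≥ ⌈n/α(G)⌉. -/
open SimpleGraph

/-- The spanning subgraph of `G` consisting of the edges that are bichromatic
(i.e. whose two endpoints receive different colors) under the 2-coloring `c`. -/
def SimpleGraph.bichromaticSubgraph {V : Type*} (G : SimpleGraph V) (c : V → Bool) :
    SimpleGraph V where
  Adj u v := G.Adj u v ∧ c u ≠ c v
  symm := ⟨fun u v h => ⟨h.1.symm, h.2.symm⟩⟩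
  loopless := ⟨fun v h => h.2 rfl⟩

/-- `G` contains an odd `K t` minor: there are `t` pairwise disjoint nonempty branch sets
and a 2-coloring of the vertices such that each branch set induces a connected subgraph
using only bichromatic edges (so it carries a spanning tree all of whose edges are
bichromatic), and every two branch sets are joined by a monochromatic edge of `G`. -/
def SimpleGraph.HasOddKMinor {V : Type*} (G : SimpleGraph V) (t : ℕ) : Prop :=
  ∃ (c : V → Bool) (B : Fin t → Set V),
    (∀ i, (B i).Nonempty) ∧
    (Pairwise fun i j => Disjoint (B i) (B j)) ∧
    (∀ i, ((G.bichromaticSubgraph c).induce (B i)).Connected) ∧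
    (∀ i j, i ≠ j → ∃ u ∈ B i, ∃ v ∈ B j, G.Adj u v ∧ c u = c v)

/-- `oh G` is the largest `t` such that `G` contains an odd `K t` minor. -/
noncomputable def SimpleGraph.oh {V : Type*} (G : SimpleGraph V) : ℕ :=
  sSup {t | G.HasOddKMinor t}

/-- The independence number of `G`. -/
noncomputable def SimpleGraph.indepNum' {V : Type*} (G : SimpleGraph V) : ℕ :=
  Gᶜ.cliqueNum

/-- The join of two vertex-disjoint graphs: take the disjoint union and add all
edges between the two parts. -/
def SimpleGraph.joinG {α β : Type*} (G : SimpleGraph α) (H : SimpleGraph β) :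
    SimpleGraph (α ⊕ β) where
  Adj u v := match u, v with
    | Sum.inl a, Sum.inl b => G.Adj a b
    | Sum.inr a, Sum.inr b => H.Adj a b
    | _, _ => True
  symm := by constructor; rintro (a | a) (b | b) h <;> first | exact h.symm | trivial
  loopless := by constructor; rintro (a | a) h <;> exact h.ne rfl


open Finset

section Aux
variable {V : Type*}

/-- A "good family": descriptors `(u,w)` denote a singleton branch set `{u}` when `u = w`
and a pair branch set `{u,w}` otherwise, with `u` the `true`-colored vertex. -/
def GoodF (G : SimpleGraph V) (c : V → Bool) (s : Finset V) (F : Finset (V × V)) : Prop :=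
  (∀ p ∈ F, p.1 ∈ s ∧ p.2 ∈ s ∧ c p.1 = true ∧ (p.1 = p.2 ∨ (G.Adj p.1 p.2 ∧ c p.2 = false))) ∧
  (∀ p ∈ F, ∀ q ∈ F, p ≠ q → p.1 ≠ q.1 ∧ p.1 ≠ q.2 ∧ p.2 ≠ q.1 ∧ p.2 ≠ q.2) ∧
  (∀ p ∈ F, ∀ q ∈ F, p ≠ q →
    ∃ x y, (x = p.1 ∨ x = p.2) ∧ (y = q.1 ∨ y = q.2) ∧ G.Adj x y ∧ c x = c y)

lemma GoodF.mono {G : SimpleGraph V} {c s s' F} (h : GoodF G c s F) (hss : s ⊆ s') :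
    GoodF G c s' F :=
  ⟨fun p hp => ⟨hss (h.1 p hp).1, hss (h.1 p hp).2.1, (h.1 p hp).2.2⟩, h.2.1, h.2.2⟩

lemma connected_pair {G' : SimpleGraph V} {a b : V} (h : a = b ∨ G'.Adj a b) :
    (G'.induce ({a, b} : Set V)).Connected := by
  have hma : a ∈ ({a, b} : Set V) := by simp
  have key : ∀ z : ({a, b} : Set V), (G'.induce ({a, b} : Set V)).Reachable z ⟨a, hma⟩ := by
    rintro ⟨z, hz⟩
    have hz' : z = a ∨ z = b := by simpa using hz
    rcases hz' with h1 | h1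
    · rw [show (⟨z, hz⟩ : ({a, b} : Set V)) = ⟨a, hma⟩ from Subtype.ext h1]
    · rcases h with h2 | h2
      · rw [show (⟨z, hz⟩ : ({a, b} : Set V)) = ⟨a, hma⟩ from Subtype.ext (h1.trans h2.symm)]
      · have hzadj : G'.Adj z a := by rw [h1]; exact h2.symm
        have : (G'.induce ({a, b} : Set V)).Adj ⟨z, hz⟩ ⟨a, hma⟩ := hzadj
        exact this.reachable
  rw [SimpleGraph.connected_iff]
  exact ⟨fun x y => (key x).trans (key y).symm, ⟨⟨a, hma⟩⟩⟩

lemma GoodF.hasOddKMinor {G : SimpleGraph V} {c s F} (h : GoodF G c s F) :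
    G.HasOddKMinor F.card := by
  classical
  obtain ⟨h1, h2, h3⟩ := h
  refine ⟨c, fun i => {(F.equivFin.symm i).1.1, (F.equivFin.symm i).1.2}, ?_, ?_, ?_, ?_⟩
  · intro i; exact ⟨_, Set.mem_insert _ _⟩
  · intro i j hij
    have hpq : (F.equivFin.symm i).1 ≠ (F.equivFin.symm j).1 := by
      intro e
      exact hij (F.equivFin.symm.injective (Subtype.ext e))
    obtain ⟨d1, d2, d3, d4⟩ := h2 _ (F.equivFin.symm i).2 _ (F.equivFin.symm j).2 hpq
    rw [Set.disjoint_left]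
    rintro x (rfl | rfl) (hx | hx) <;> simp_all
  · intro i
    apply connected_pair
    rcases (h1 _ (F.equivFin.symm i).2).2.2.2 with he | ⟨ha, hc2⟩
    · exact Or.inl he
    · refine Or.inr (show G.Adj _ _ ∧ _ from ⟨ha, ?_⟩)
      rw [(h1 _ (F.equivFin.symm i).2).2.2.1, hc2]; simp
  · intro i j hij
    have hpq : (F.equivFin.symm i).1 ≠ (F.equivFin.symm j).1 := by
      intro e
      exact hij (F.equivFin.symm.injective (Subtype.ext e))
    obtain ⟨x, y, hx, hy, hadj, hcxy⟩ := h3 _ (F.equivFin.symm i).2 _ (F.equivFin.symm j).2 hpq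
    exact ⟨x, by rcases hx with rfl | rfl <;> simp, y, by rcases hy with rfl | rfl <;> simp,
      hadj, hcxy⟩

lemma hasOddKMinor_mono {G : SimpleGraph V} {t t'} (h : t' ≤ t) :
    G.HasOddKMinor t → G.HasOddKMinor t' := by
  rintro ⟨c, B, h1, h2, h3, h4⟩
  refine ⟨c, fun i => B (Fin.castLE h i), fun i => h1 _, fun i j hij => h2 ?_, fun i => h3 _,
    fun i j hij => h4 _ _ ?_⟩
  · exact fun e => hij (Fin.castLE_injective h e)
  · exact fun e => hij (Fin.castLE_injective h e)

lemma hasOddKMinor_le_card [Fintype V] {G : SimpleGraph V} {t} (h : G.HasOddKMinor t) :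
    t ≤ Fintype.card V := by
  obtain ⟨c, B, h1, h2, -, -⟩ := h
  choose g hg using h1
  have hinj : Function.Injective g := by
    intro i j hij
    by_contra hne
    exact ((h2 hne).ne_of_mem (hg i) (hg j)) hij
  simpa using Fintype.card_le_of_injective g hinj

end Aux

section Aux2
variable {V : Type*}
open Finset

lemma gadj_of_not_compl {G : SimpleGraph V} {a b : V} (hne : a ≠ b) (h : ¬Gᶜ.Adj a b) :
    G.Adj a b := by
  by_contra hg
  exact h ((SimpleGraph.compl_adj G a b).mpr ⟨hne, hg⟩)

lemma GoodF.union [DecidableEq V] {G : SimpleGraph V} {c1 c2 : V → Bool} {s1 s2 : Finset V}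
    {F1 F2 : Finset (V × V)}
    (h1 : GoodF G c1 s1 F1) (h2 : GoodF G c2 s2 F2)
    (hdisj : ∀ a ∈ s1, a ∉ s2)
    (hadj : ∀ a ∈ s1, ∀ b ∈ s2, G.Adj a b) :
    GoodF G (fun v => if v ∈ s1 then c1 v else c2 v) (s1 ∪ s2) (F1 ∪ F2) ∧
      (F1 ∪ F2).card = F1.card + F2.card := by
  classical
  obtain ⟨a1, b1, c1'⟩ := h1
  obtain ⟨a2, b2, c2'⟩ := h2
  have hFdisj : Disjoint F1 F2 := by
    rw [Finset.disjoint_left]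
    intro p hp1 hp2
    exact hdisj _ (a1 p hp1).1 (a2 p hp2).1
  have hcc1 : ∀ x ∈ s1, (if x ∈ s1 then c1 x else c2 x) = c1 x := fun x hx => if_pos hx
  have hcc2 : ∀ x ∈ s2, (if x ∈ s1 then c1 x else c2 x) = c2 x := fun x hx =>
    if_neg (fun h => hdisj x h hx)
  refine ⟨⟨?_, ?_, ?_⟩, Finset.card_union_of_disjoint hFdisj⟩
  · intro p hp
    rcases Finset.mem_union.mp hp with hp | hp
    · obtain ⟨m1, m2, ct, hrest⟩ := a1 p hp
      refine ⟨Finset.mem_union_left _ m1, Finset.mem_union_left _ m2, by simp only [hcc1 _ m1]; exact ct, ?_⟩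
      rcases hrest with he | ⟨hadj', cf⟩
      · exact Or.inl he
      · exact Or.inr ⟨hadj', by simp only [hcc1 _ m2]; exact cf⟩
    · obtain ⟨m1, m2, ct, hrest⟩ := a2 p hp
      refine ⟨Finset.mem_union_right _ m1, Finset.mem_union_right _ m2, by simp only [hcc2 _ m1]; exact ct, ?_⟩
      rcases hrest with he | ⟨hadj', cf⟩
      · exact Or.inl he
      · exact Or.inr ⟨hadj', by simp only [hcc2 _ m2]; exact cf⟩
  · intro p hp q hq hpq
    rcases Finset.mem_union.mp hp with hp' | hp' <;> rcases Finset.mem_union.mp hq with hq' | hq'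
    · exact b1 p hp' q hq' hpq
    · obtain ⟨m1, m2, -, -⟩ := a1 p hp'
      obtain ⟨n1, n2, -, -⟩ := a2 q hq'
      exact ⟨fun e => hdisj _ m1 (e ▸ n1), fun e => hdisj _ m1 (e ▸ n2),
        fun e => hdisj _ m2 (e ▸ n1), fun e => hdisj _ m2 (e ▸ n2)⟩
    · obtain ⟨m1, m2, -, -⟩ := a2 p hp'
      obtain ⟨n1, n2, -, -⟩ := a1 q hq'
      exact ⟨fun e => hdisj _ n1 (e.symm ▸ m1), fun e => hdisj _ n2 (e.symm ▸ m1),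
        fun e => hdisj _ n1 (e.symm ▸ m2), fun e => hdisj _ n2 (e.symm ▸ m2)⟩
    · exact b2 p hp' q hq' hpq
  · intro p hp q hq hpq
    rcases Finset.mem_union.mp hp with hp' | hp' <;> rcases Finset.mem_union.mp hq with hq' | hq'
    · obtain ⟨x, y, hx, hy, hxy, hcxy⟩ := c1' p hp' q hq' hpq
      have hxs : x ∈ s1 := by rcases hx with rfl | rfl; exacts [(a1 p hp').1, (a1 p hp').2.1]
      have hys : y ∈ s1 := by rcases hy with rfl | rfl; exacts [(a1 q hq').1, (a1 q hq').2.1]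
      exact ⟨x, y, hx, hy, hxy, by simp only [hcc1 _ hxs, hcc1 _ hys]; exact hcxy⟩
    · refine ⟨p.1, q.1, Or.inl rfl, Or.inl rfl, hadj _ (a1 p hp').1 _ (a2 q hq').1, ?_⟩
      simp only [hcc1 _ (a1 p hp').1, hcc2 _ (a2 q hq').1, (a1 p hp').2.2.1, (a2 q hq').2.2.1]
      rw [if_pos (a1 p hp').1, if_neg (fun h => hdisj _ h (a2 q hq').1)]
    · refine ⟨p.1, q.1, Or.inl rfl, Or.inl rfl, (hadj _ (a1 q hq').1 _ (a2 p hp').1).symm, ?_⟩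
      simp only [hcc2 _ (a2 p hp').1, hcc1 _ (a1 q hq').1, (a2 p hp').2.2.1, (a1 q hq').2.2.1]
      rw [if_neg (fun h => hdisj _ h (a2 p hp').1), if_pos (a1 q hq').1]
    · obtain ⟨x, y, hx, hy, hxy, hcxy⟩ := c2' p hp' q hq' hpq
      have hxs : x ∈ s2 := by rcases hx with rfl | rfl; exacts [(a2 p hp').1, (a2 p hp').2.1]
      have hys : y ∈ s2 := by rcases hy with rfl | rfl; exacts [(a2 q hq').1, (a2 q hq').2.1]
      exact ⟨x, y, hx, hy, hxy, by simp only [hcc2 _ hxs, hcc2 _ hys]; exact hcxy⟩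

lemma goodF_indep [DecidableEq V] {G : SimpleGraph V} {T : Finset V}
    (hind : ∀ a ∈ T, ∀ b ∈ T, a ≠ b → G.Adj a b) :
    GoodF G (fun _ => true) T (T.image fun v => (v, v)) ∧
      (T.image fun v => (v, v)).card = T.card := by
  classical
  constructor
  · refine ⟨?_, ?_, ?_⟩
    · intro p hp
      obtain ⟨v, hv, rfl⟩ := Finset.mem_image.mp hp
      exact ⟨hv, hv, rfl, Or.inl rfl⟩
    · intro p hp q hq hpq
      obtain ⟨v, hv, rfl⟩ := Finset.mem_image.mp hp
      obtain ⟨w, hw, rfl⟩ := Finset.mem_image.mp hq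
      have : v ≠ w := fun e => hpq (by rw [e])
      exact ⟨this, this, this, this⟩
    · intro p hp q hq hpq
      obtain ⟨v, hv, rfl⟩ := Finset.mem_image.mp hp
      obtain ⟨w, hw, rfl⟩ := Finset.mem_image.mp hq
      have : v ≠ w := fun e => hpq (by rw [e])
      exact ⟨v, w, Or.inl rfl, Or.inl rfl, hind v hv w hw this, rfl⟩
  · exact Finset.card_image_of_injective _ (fun a b e => (Prod.mk.injEq _ _ _ _ ▸ e : _ ∧ _).1)

/-- Greedy independent set in a graph of max degree ≤ 2. -/
lemma greedy_indep (H : SimpleGraph V)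
    (hdeg : ∀ v : V, ∃ x y : V, ∀ u, H.Adj v u → u = x ∨ u = y) :
    ∀ s : Finset V, ∃ T : Finset V, T ⊆ s ∧
      (∀ a ∈ T, ∀ b ∈ T, a ≠ b → ¬H.Adj a b) ∧ s.card ≤ 3 * T.card := by
  classical
  intro s
  induction s using Finset.strongInduction with
  | _ s ih =>
    rcases s.eq_empty_or_nonempty with rfl | ⟨v, hv⟩
    · exact ⟨∅, Finset.Subset.refl _, by simp, by simp⟩
    · obtain ⟨x, y, hxy⟩ := hdeg v
      set D : Finset V := insert v {x, y} with hD
      have hss : s \ D ⊂ s := by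
        refine Finset.ssubset_iff_of_subset (Finset.sdiff_subset) |>.mpr ?_
        exact ⟨v, hv, by simp [hD]⟩
      obtain ⟨T, hT1, hT2, hT3⟩ := ih _ hss
      have hvT : v ∉ T := fun h => by simpa [hD] using (hT1 h)
      refine ⟨insert v T, ?_, ?_, ?_⟩
      · intro a ha
        rcases Finset.mem_insert.mp ha with rfl | ha
        · exact hv
        · exact (Finset.sdiff_subset) (hT1 ha)
      · intro a ha b hb hab
        rcases Finset.mem_insert.mp ha with ha' | ha' <;>
          rcases Finset.mem_insert.mp hb with hb' | hb'
        · exact absurd (ha'.trans hb'.symm) hab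
        · subst ha'
          intro hadj
          have hbD : b ∈ D := by rcases hxy b hadj with h | h <;> simp [hD, h]
          exact (Finset.mem_sdiff.mp (hT1 hb')).2 hbD
        · subst hb'
          intro hadj
          have haD : a ∈ D := by rcases hxy a hadj.symm with h | h <;> simp [hD, h]
          exact (Finset.mem_sdiff.mp (hT1 ha')).2 haD
        · exact hT2 a ha' b hb' hab
      · have hcard1 : s.card ≤ (s \ D).card + D.card := by
          have h2 : s ⊆ (s \ D) ∪ D := by
            intro a ha
            by_cases haD : a ∈ D
            · exact Finset.mem_union_right _ haD
            · exact Finset.mem_union_left _ (Finset.mem_sdiff.mpr ⟨ha, haD⟩)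
          calc s.card ≤ ((s \ D) ∪ D).card := Finset.card_le_card h2
            _ ≤ (s \ D).card + D.card := Finset.card_union_le _ _
        have hDcard : D.card ≤ 3 := by
          apply le_trans (Finset.card_insert_le _ _)
          have : ({x, y} : Finset V).card ≤ 2 := Finset.card_insert_le _ _ |>.trans (by simp)
          omega
        have : (insert v T).card = T.card + 1 := by
          rw [Finset.card_insert_of_notMem hvT]
        omega
end Aux2

section CycleConf
variable {V : Type*}
open Finset

/-- Configuration on a chordless cycle `f 0, f 1, ..., f (k-1)` in the complement graph. -/
lemma cycle_conf [DecidableEq V] {G : SimpleGraph V} (f : ℕ → V) (k : ℕ) (hk : 4 ≤ k)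
    (hper : ∀ n, f (n % k) = f n)
    (INJ : ∀ a b, a < k → b < k → f a = f b → a = b)
    (NBR : ∀ i u, Gᶜ.Adj (f i) u → u = f ((i + 1) % k) ∨ u = f ((i + k - 1) % k)) :
    ∃ (c1 : V → Bool) (F1 : Finset (V × V)),
      GoodF G c1 ((Finset.range k).image f) F1 ∧ k ≤ 2 * F1.card := by
  classical
  have hkpos : 0 < k := by omega
  have hmod : ∀ x, x < k → x % k = x := fun x h => Nat.mod_eq_of_lt h
  have hmod2 : ∀ x, k ≤ x → x < 2 * k → x % k = x - k := fun x h1 h2 => by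
    rw [Nat.mod_eq_sub_mod h1, Nat.mod_eq_of_lt (by omega)]
  have INJMOD : ∀ a b, f a = f b → a % k = b % k := by
    intro a b e
    have e' : f (a % k) = f (b % k) := by rw [hper, hper]; exact e
    exact INJ _ _ (Nat.mod_lt _ hkpos) (Nat.mod_lt _ hkpos) e'
  have FNE : ∀ a b, a < k → b < k → a ≠ b → f a ≠ f b := by
    intro a b ha hb hne e; exact hne (INJ a b ha hb e)
  have key : ∀ i j, j < k → j ≠ (i + 1) % k → j ≠ (i + k - 1) % k →
      ¬Gᶜ.Adj (f i) (f j) := by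
    intro i j hj h1 h2 hadj'
    rcases NBR i _ hadj' with e | e
    · have := INJMOD _ _ e
      rw [hmod j hj, Nat.mod_mod_of_dvd _ dvd_rfl] at this
      exact h1 this
    · have := INJMOD _ _ e
      rw [hmod j hj, Nat.mod_mod_of_dvd _ dvd_rfl] at this
      exact h2 this
  have hmem : ∀ x, x < k → f x ∈ (Finset.range k).image f := by
    intro x hx; exact Finset.mem_image.mpr ⟨x, Finset.mem_range.mpr hx, rfl⟩
  have hcardR : ((Finset.range k).image f).card = k := by
    rw [Finset.card_image_of_injOn, Finset.card_range]
    intro a ha b hb e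
    exact INJ a b (Finset.mem_range.mp ha) (Finset.mem_range.mp hb) e
  rcases Nat.even_or_odd k with ⟨m, hm⟩ | ⟨m, hm⟩
  · -- k = 2m even : m singletons f 0, f 2, ..., f (2m-2)
    have hm2 : 2 ≤ m := by omega
    refine ⟨fun _ => true, (Finset.range m).image fun i => (f (2 * i), f (2 * i)), ⟨?_, ?_, ?_⟩, ?_⟩
    · intro p hp
      obtain ⟨i, hi, rfl⟩ := Finset.mem_image.mp hp
      have hi' := Finset.mem_range.mp hi
      exact ⟨hmem _ (by omega), hmem _ (by omega), rfl, Or.inl rfl⟩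
    · intro p hp q hq hpq
      obtain ⟨i, hi, rfl⟩ := Finset.mem_image.mp hp
      obtain ⟨j, hj, rfl⟩ := Finset.mem_image.mp hq
      have : f (2 * i) ≠ f (2 * j) := fun e => hpq (by rw [e])
      exact ⟨this, this, this, this⟩
    · intro p hp q hq hpq
      obtain ⟨i, hi, rfl⟩ := Finset.mem_image.mp hp
      obtain ⟨j, hj, rfl⟩ := Finset.mem_image.mp hq
      have hi' := Finset.mem_range.mp hi
      have hj' := Finset.mem_range.mp hj
      have hne : i ≠ j := fun e => hpq (by rw [e])
      refine ⟨f (2 * i), f (2 * j), Or.inl rfl, Or.inl rfl, ?_, rfl⟩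
      apply gadj_of_not_compl (FNE _ _ (by omega) (by omega) (by omega))
      refine key (2 * i) (2 * j) (by omega) ?_ ?_
      · rw [hmod (2 * i + 1) (by omega)]; omega
      · rcases Nat.eq_zero_or_pos i with rfl | hpos
        · rw [hmod (2 * 0 + k - 1) (by omega)]; omega
        · rw [hmod2 (2 * i + k - 1) (by omega) (by omega)]; omega
    · have : ((Finset.range m).image fun i => (f (2 * i), f (2 * i))).card = m := by
        rw [Finset.card_image_of_injOn, Finset.card_range]
        intro a ha b hb e
        have := congrArg Prod.fst e
        exact Nat.eq_of_mul_eq_mul_left (by omega)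
          (INJ _ _ (by have := Finset.mem_range.mp ha; omega)
            (by have := Finset.mem_range.mp hb; omega) this)
      omega
  · -- k = 2m+1 odd
    have hm2 : 2 ≤ m := by omega
    set c1 : V → Bool := fun v => if v = f 0 ∨ v = f (2 * m - 2) then false else true with hc1
    have hctrue : ∀ x, x < k → x ≠ 0 → x ≠ 2 * m - 2 → c1 (f x) = true := by
      intro x hx h0 h2
      have hnot : ¬(f x = f 0 ∨ f x = f (2 * m - 2)) := by
        rintro (h | h)
        · exact FNE _ _ hx (by omega) h0 h
        · exact FNE _ _ hx (by omega) h2 h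
      simp only [hc1, if_neg hnot]
    have hcf0 : c1 (f 0) = false := by simp [hc1]
    have hcf2m2 : c1 (f (2 * m - 2)) = false := by simp [hc1]
    set SNG : Finset (V × V) := (Finset.range (m - 1)).image fun i => (f (2 * i + 1), f (2 * i + 1)) with hSNG
    set P1 : V × V := (f (2 * m - 1), f 0) with hP1
    set P2 : V × V := (f (2 * m), f (2 * m - 2)) with hP2
    have hself : (2 * m + 1) % k = 0 := by rw [hm]; exact Nat.mod_self _
    have N1 : ∀ i j, i < m - 1 → j < m - 1 → i ≠ j → ¬Gᶜ.Adj (f (2 * i + 1)) (f (2 * j + 1)) := by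
      intro i j hi hj hne
      refine key _ _ (by omega) ?_ ?_
      · rw [hmod (2 * i + 1 + 1) (by omega)]; omega
      · rw [hmod2 (2 * i + 1 + k - 1) (by omega) (by omega)]; omega
    have N2 : ∀ j, j < m - 1 → ¬Gᶜ.Adj (f (2 * m - 1)) (f (2 * j + 1)) := by
      intro j hj
      refine key _ _ (by omega) ?_ ?_
      · rw [hmod (2 * m - 1 + 1) (by omega)]; omega
      · rw [hmod2 (2 * m - 1 + k - 1) (by omega) (by omega)]; omega
    have N3 : ∀ j, j < m - 1 → ¬Gᶜ.Adj (f (2 * m)) (f (2 * j + 1)) := by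
      intro j hj
      refine key _ _ (by omega) ?_ ?_
      · rw [show 2 * m + 1 = 2 * m + 1 from rfl] at hself
        rw [hself]; omega
      · rw [hmod2 (2 * m + k - 1) (by omega) (by omega)]; omega
    have N4 : ¬Gᶜ.Adj (f (2 * m - 1)) (f 0) := by
      refine key _ _ (by omega) ?_ ?_
      · rw [hmod (2 * m - 1 + 1) (by omega)]; omega
      · rw [hmod2 (2 * m - 1 + k - 1) (by omega) (by omega)]; omega
    have N5 : ¬Gᶜ.Adj (f (2 * m)) (f (2 * m - 2)) := by
      refine key _ _ (by omega) ?_ ?_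
      · rw [hself]; omega
      · rw [hmod2 (2 * m + k - 1) (by omega) (by omega)]; omega
    have N6 : ¬Gᶜ.Adj (f 0) (f (2 * m - 2)) := by
      refine key _ _ (by omega) ?_ ?_
      · rw [hmod (0 + 1) (by omega)]; omega
      · rw [hmod (0 + k - 1) (by omega)]; omega
    have A1 : ∀ i j, i < m - 1 → j < m - 1 → i ≠ j → G.Adj (f (2 * i + 1)) (f (2 * j + 1)) :=
      fun i j hi hj hne =>
        gadj_of_not_compl (FNE _ _ (by omega) (by omega) (by omega)) (N1 i j hi hj hne)
    have A2 : ∀ j, j < m - 1 → G.Adj (f (2 * m - 1)) (f (2 * j + 1)) := fun j hj =>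
      gadj_of_not_compl (FNE _ _ (by omega) (by omega) (by omega)) (N2 j hj)
    have A3 : ∀ j, j < m - 1 → G.Adj (f (2 * m)) (f (2 * j + 1)) := fun j hj =>
      gadj_of_not_compl (FNE _ _ (by omega) (by omega) (by omega)) (N3 j hj)
    have A4 : G.Adj (f (2 * m - 1)) (f 0) :=
      gadj_of_not_compl (FNE _ _ (by omega) (by omega) (by omega)) N4
    have A5 : G.Adj (f (2 * m)) (f (2 * m - 2)) :=
      gadj_of_not_compl (FNE _ _ (by omega) (by omega) (by omega)) N5
    have A6 : G.Adj (f 0) (f (2 * m - 2)) :=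
      gadj_of_not_compl (FNE _ _ (by omega) (by omega) (by omega)) N6
    have hmemF : ∀ p ∈ insert P1 (insert P2 SNG),
        p = P1 ∨ p = P2 ∨ ∃ i, i < m - 1 ∧ p = (f (2 * i + 1), f (2 * i + 1)) := by
      intro p hp
      rcases Finset.mem_insert.mp hp with h | hp'
      · exact Or.inl h
      rcases Finset.mem_insert.mp hp' with h | hp''
      · exact Or.inr (Or.inl h)
      · obtain ⟨i, hi, e⟩ := Finset.mem_image.mp hp''
        exact Or.inr (Or.inr ⟨i, Finset.mem_range.mp hi, e.symm⟩)
    have hct1 : ∀ j, j < m - 1 → c1 (f (2 * j + 1)) = true := fun j hj =>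
      hctrue _ (by omega) (by omega) (by omega)
    have hctP1 : c1 (f (2 * m - 1)) = true := hctrue _ (by omega) (by omega) (by omega)
    have hctP2 : c1 (f (2 * m)) = true := hctrue _ (by omega) (by omega) (by omega)
    refine ⟨c1, insert P1 (insert P2 SNG), ⟨?_, ?_, ?_⟩, ?_⟩
    · intro p hp
      rcases hmemF p hp with rfl | rfl | ⟨i, hi, rfl⟩
      · exact ⟨hmem _ (by omega), hmem _ (by omega), hctP1, Or.inr ⟨A4, hcf0⟩⟩
      · exact ⟨hmem _ (by omega), hmem _ (by omega), hctP2, Or.inr ⟨A5, hcf2m2⟩⟩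
      · exact ⟨hmem _ (by omega), hmem _ (by omega), hct1 i hi, Or.inl rfl⟩
    · intro p hp q hq hpq
      rcases hmemF p hp with rfl | rfl | ⟨i, hi, rfl⟩ <;>
        rcases hmemF q hq with rfl | rfl | ⟨j, hj, rfl⟩
      · exact absurd rfl hpq
      · exact ⟨FNE _ _ (by omega) (by omega) (by omega), FNE _ _ (by omega) (by omega) (by omega),
          FNE _ _ (by omega) (by omega) (by omega), FNE _ _ (by omega) (by omega) (by omega)⟩
      · exact ⟨FNE _ _ (by omega) (by omega) (by omega), FNE _ _ (by omega) (by omega) (by omega),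
          FNE _ _ (by omega) (by omega) (by omega), FNE _ _ (by omega) (by omega) (by omega)⟩
      · exact ⟨FNE _ _ (by omega) (by omega) (by omega), FNE _ _ (by omega) (by omega) (by omega),
          FNE _ _ (by omega) (by omega) (by omega), FNE _ _ (by omega) (by omega) (by omega)⟩
      · exact absurd rfl hpq
      · exact ⟨FNE _ _ (by omega) (by omega) (by omega), FNE _ _ (by omega) (by omega) (by omega),
          FNE _ _ (by omega) (by omega) (by omega), FNE _ _ (by omega) (by omega) (by omega)⟩
      · exact ⟨FNE _ _ (by omega) (by omega) (by omega), FNE _ _ (by omega) (by omega) (by omega),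
          FNE _ _ (by omega) (by omega) (by omega), FNE _ _ (by omega) (by omega) (by omega)⟩
      · exact ⟨FNE _ _ (by omega) (by omega) (by omega), FNE _ _ (by omega) (by omega) (by omega),
          FNE _ _ (by omega) (by omega) (by omega), FNE _ _ (by omega) (by omega) (by omega)⟩
      · have hij : i ≠ j := by
          intro e; exact hpq (by rw [e])
        exact ⟨FNE _ _ (by omega) (by omega) (by omega), FNE _ _ (by omega) (by omega) (by omega),
          FNE _ _ (by omega) (by omega) (by omega), FNE _ _ (by omega) (by omega) (by omega)⟩
    · intro p hp q hq hpq
      rcases hmemF p hp with rfl | rfl | ⟨i, hi, rfl⟩ <;>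
        rcases hmemF q hq with rfl | rfl | ⟨j, hj, rfl⟩
      · exact absurd rfl hpq
      · exact ⟨f 0, f (2 * m - 2), Or.inr rfl, Or.inr rfl, A6, by rw [hcf0, hcf2m2]⟩
      · exact ⟨f (2 * m - 1), f (2 * j + 1), Or.inl rfl, Or.inl rfl, A2 j hj,
          by rw [hctP1, hct1 j hj]⟩
      · exact ⟨f (2 * m - 2), f 0, Or.inr rfl, Or.inr rfl, A6.symm, by rw [hcf0, hcf2m2]⟩
      · exact absurd rfl hpq
      · exact ⟨f (2 * m), f (2 * j + 1), Or.inl rfl, Or.inl rfl, A3 j hj,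
          by rw [hctP2, hct1 j hj]⟩
      · exact ⟨f (2 * i + 1), f (2 * m - 1), Or.inl rfl, Or.inl rfl, (A2 i hi).symm,
          by rw [hctP1, hct1 i hi]⟩
      · exact ⟨f (2 * i + 1), f (2 * m), Or.inl rfl, Or.inl rfl, (A3 i hi).symm,
          by rw [hctP2, hct1 i hi]⟩
      · have hij : i ≠ j := by
          intro e; exact hpq (by rw [e])
        exact ⟨f (2 * i + 1), f (2 * j + 1), Or.inl rfl, Or.inl rfl, A1 i j hi hj hij,
          by rw [hct1 i hi, hct1 j hj]⟩
    · have hSc : SNG.card = m - 1 := by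
        rw [hSNG, Finset.card_image_of_injOn, Finset.card_range]
        intro a ha b hb e
        have e1 : f (2 * a + 1) = f (2 * b + 1) := congrArg Prod.fst e
        have := INJ _ _ (by have := Finset.mem_range.mp ha; omega)
          (by have := Finset.mem_range.mp hb; omega) e1
        omega
      have hP2S : P2 ∉ SNG := by
        intro h
        obtain ⟨i, hi, e⟩ := Finset.mem_image.mp h
        have e1 : f (2 * i + 1) = f (2 * m) := congrArg Prod.fst e
        have := INJ _ _ (by have := Finset.mem_range.mp hi; omega) (by omega) e1
        have := Finset.mem_range.mp hi
        omega
      have hP1S : P1 ∉ insert P2 SNG := by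
        intro h
        rcases Finset.mem_insert.mp h with e | h'
        · have e1 : f (2 * m - 1) = f (2 * m) := congrArg Prod.fst e
          have := INJ _ _ (by omega) (by omega) e1
          omega
        · obtain ⟨i, hi, e⟩ := Finset.mem_image.mp h'
          have e1 : f (2 * i + 1) = f (2 * m - 1) := congrArg Prod.fst e
          have := INJ _ _ (by have := Finset.mem_range.mp hi; omega) (by omega) e1
          have := Finset.mem_range.mp hi
          omega
      rw [Finset.card_insert_of_notMem hP1S, Finset.card_insert_of_notMem hP2S, hSc]
      omega

end CycleConf

section Main2
variable {V : Type*}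
open Finset

lemma main2 (G : SimpleGraph V)
    (hdeg : ∀ v : V, ∃ x y : V, ∀ u, Gᶜ.Adj v u → u = x ∨ u = y)
    (htf : ∀ a b c : V, Gᶜ.Adj a b → Gᶜ.Adj b c → Gᶜ.Adj a c → False) :
    ∀ s : Finset V, ∃ (c : V → Bool) (F : Finset (V × V)),
      GoodF G c s F ∧ s.card ≤ 2 * F.card := by
  classical
  intro s
  induction s using Finset.strongInduction with
  | _ s ih =>
  by_cases hB : ∃ v ∈ s, ∃ w : V, ∀ u ∈ s, Gᶜ.Adj v u → u = w
  · -- some vertex has at most one complement-neighbor in s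
    obtain ⟨v, hv, w, hw⟩ := hB
    have hss : s \ {v, w} ⊂ s :=
      (Finset.ssubset_iff_of_subset Finset.sdiff_subset).mpr ⟨v, hv, by simp⟩
    obtain ⟨c2, F2, hg2, hc2⟩ := ih _ hss
    have hgv : GoodF G (fun _ => true) {v} {(v, v)} := by
      refine ⟨?_, ?_, ?_⟩
      · intro p hp
        rw [Finset.mem_singleton] at hp; subst hp
        exact ⟨by simp, by simp, rfl, Or.inl rfl⟩
      · intro p hp q hq hpq
        rw [Finset.mem_singleton] at hp hq; subst hp; subst hq
        exact absurd rfl hpq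
      · intro p hp q hq hpq
        rw [Finset.mem_singleton] at hp hq; subst hp; subst hq
        exact absurd rfl hpq
    have hdisj : ∀ a ∈ ({v} : Finset V), a ∉ s \ {v, w} := by
      intro a ha hmem
      rw [Finset.mem_singleton] at ha; subst ha
      simp at hmem
    have hadj : ∀ a ∈ ({v} : Finset V), ∀ b ∈ s \ {v, w}, G.Adj a b := by
      intro a ha b hb
      rw [Finset.mem_singleton] at ha; subst ha
      obtain ⟨hbs, hbn⟩ := Finset.mem_sdiff.mp hb
      simp only [Finset.mem_insert, Finset.mem_singleton, not_or] at hbn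
      refine gadj_of_not_compl (fun e => hbn.1 e.symm) ?_
      intro hcadj
      exact hbn.2 (hw b hbs hcadj)
    obtain ⟨hgU, hcU⟩ := hgv.union hg2 hdisj hadj
    refine ⟨_, _, hgU.mono ?_, ?_⟩
    · intro x hx
      rcases Finset.mem_union.mp hx with hx | hx
      · rw [Finset.mem_singleton] at hx; subst hx; exact hv
      · exact Finset.sdiff_subset hx
    · have h1 : s.card ≤ (s \ {v, w}).card + 2 := by
        have h2 : s ⊆ (s \ {v, w}) ∪ {v, w} := by
          intro a ha
          by_cases haw : a ∈ ({v, w} : Finset V)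
          · exact Finset.mem_union_right _ haw
          · exact Finset.mem_union_left _ (Finset.mem_sdiff.mpr ⟨ha, haw⟩)
        calc s.card ≤ ((s \ {v, w}) ∪ {v, w}).card := Finset.card_le_card h2
          _ ≤ (s \ {v, w}).card + ({v, w} : Finset V).card := Finset.card_union_le _ _
          _ ≤ (s \ {v, w}).card + 2 := by
              have : ({v, w} : Finset V).card ≤ 2 :=
                (Finset.card_insert_le _ _).trans (by simp)
              omega
      have hcs : ({((v, v))} : Finset (V × V)).card = 1 := Finset.card_singleton _
      omega
  · -- all vertices in s have two complement-neighbors in s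
    rcases s.eq_empty_or_nonempty with rfl | ⟨v0, hv0⟩
    · exact ⟨fun _ => true, ∅, ⟨by simp, by simp, by simp⟩, by simp⟩
    push_neg at hB
    have TWO : ∀ v ∈ s, ∀ x y : V, Gᶜ.Adj v x → Gᶜ.Adj v y → x ≠ y →
        ∀ u, Gᶜ.Adj v u → u = x ∨ u = y := by
      intro v _ x y hx hy hxy u hu
      obtain ⟨a, b, hab⟩ := hdeg v
      rcases hab x hx with h1 | h1 <;> rcases hab y hy with h2 | h2
      · exact absurd (h1.trans h2.symm) hxy
      · rcases hab u hu with h3 | h3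
        · exact Or.inl (h3.trans h1.symm)
        · exact Or.inr (h3.trans h2.symm)
      · rcases hab u hu with h3 | h3
        · exact Or.inr (h3.trans h2.symm)
        · exact Or.inl (h3.trans h1.symm)
      · exact absurd (h1.trans h2.symm) hxy
    have DEG2 : ∀ v ∈ s, ∃ a b : V, a ∈ s ∧ b ∈ s ∧ a ≠ b ∧ Gᶜ.Adj v a ∧ Gᶜ.Adj v b := by
      intro v hv
      obtain ⟨a, ha, haa, -⟩ := hB v hv v
      obtain ⟨b, hb, hba, hbne⟩ := hB v hv a
      exact ⟨a, b, ha, hb, Ne.symm hbne, haa, hba⟩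
    have hstep : ∀ p : V × V, ∃ x : V, (p.1 ∈ s ∧ p.2 ∈ s ∧ Gᶜ.Adj p.1 p.2) →
        (x ∈ s ∧ Gᶜ.Adj p.2 x ∧ x ≠ p.1) := by
      intro p
      by_cases hp : p.1 ∈ s ∧ p.2 ∈ s ∧ Gᶜ.Adj p.1 p.2
      · obtain ⟨a, b, ha, hb, hab, haa, hba⟩ := DEG2 p.2 hp.2.1
        by_cases hpa : a = p.1
        · exact ⟨b, fun _ => ⟨hb, hba, fun e => hab (hpa ▸ e.symm ▸ rfl)⟩⟩
        · exact ⟨a, fun _ => ⟨ha, haa, hpa⟩⟩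
      · exact ⟨v0, fun h => absurd h hp⟩
    choose stp hstp using hstep
    obtain ⟨a0, b0, ha0, hb0, hab0, haa0, hba0⟩ := DEG2 v0 hv0
    set Fc : ℕ → V × V := fun n => Nat.rec (v0, a0) (fun _ p => (p.2, stp p)) n with hFc
    set f : ℕ → V := fun n => (Fc n).1 with hf
    have hFcs : ∀ n, Fc (n + 1) = ((Fc n).2, stp (Fc n)) := fun n => rfl
    have INV : ∀ n, (Fc n).1 ∈ s ∧ (Fc n).2 ∈ s ∧ Gᶜ.Adj (Fc n).1 (Fc n).2 := by
      intro n
      induction n with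
      | zero => exact ⟨hv0, ha0, haa0⟩
      | succ n ihn =>
        rw [hFcs n]
        have h := hstp (Fc n) ihn
        exact ⟨ihn.2.1, h.1, h.2.1⟩
    have hf1 : ∀ n, f (n + 1) = (Fc n).2 := fun n => rfl
    have hfs : ∀ n, f n ∈ s := fun n => (INV n).1
    have hadjf : ∀ n, Gᶜ.Adj (f n) (f (n + 1)) := fun n => by
      rw [hf1 n]; exact (INV n).2.2
    have hstep2 : ∀ n, f (n + 2) ≠ f n := by
      intro n
      have h1 : f (n + 2) = stp (Fc n) := by
        rw [show n + 2 = (n + 1) + 1 from rfl, hf1 (n + 1), hFcs n]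
      rw [h1]
      exact (hstp (Fc n) (INV n)).2.2
    have hpig : ∃ j : ℕ, ∃ i, i < j ∧ f i = f j := by
      obtain ⟨i, hi, j, hj, hne, he⟩ := Finset.exists_ne_map_eq_of_card_lt_of_maps_to
        (s := Finset.range (s.card + 1)) (t := s) (by simp) (fun n _ => hfs n)
      rcases lt_trichotomy i j with h | h | h
      · exact ⟨j, i, h, he⟩
      · exact absurd h hne
      · exact ⟨i, j, h, he.symm⟩
    set k := Nat.find hpig with hkdef
    obtain ⟨i0, hi0k, hfi0⟩ := Nat.find_spec hpig
    have hmin : ∀ j, j < k → ∀ i, i < j → f i ≠ f j := by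
      intro j hj i hij e
      exact Nat.find_min hpig hj ⟨i, hij, e⟩
    have INJ : ∀ a b, a < k → b < k → f a = f b → a = b := by
      intro a b ha hb e
      rcases lt_trichotomy a b with h | h | h
      · exact absurd e (hmin b hb a h)
      · exact h
      · exact absurd e.symm (hmin a ha b h)
    have hi00 : i0 = 0 := by
      by_contra h0
      have hi1 : 1 ≤ i0 := by omega
      have e1 : Gᶜ.Adj (f i0) (f (i0 + 1)) := hadjf i0
      have e2 : Gᶜ.Adj (f i0) (f (i0 - 1)) := by
        have h := hadjf (i0 - 1)
        rw [show i0 - 1 + 1 = i0 by omega] at h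
        exact h.symm
      have hne12 : f (i0 + 1) ≠ f (i0 - 1) := by
        have h := hstep2 (i0 - 1)
        rw [show i0 - 1 + 2 = i0 + 1 by omega] at h
        exact h
      have e3 : Gᶜ.Adj (f i0) (f (k - 1)) := by
        have h := hadjf (k - 1)
        rw [show k - 1 + 1 = k by omega, ← hfi0] at h
        exact h.symm
      rcases TWO (f i0) (hfs i0) _ _ e1 e2 hne12 _ e3 with e | e
      · by_cases hc : i0 + 1 = k - 1
        · have hk : k = i0 + 2 := by omega
          exact hstep2 i0 (by rw [← hk, ← hfi0])
        · by_cases hc2 : i0 + 1 = k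
          · have : Gᶜ.Adj (f i0) (f i0) := by
              have h := e1
              rw [hc2, ← hfi0] at h
              exact h
            exact this.ne rfl
          · exact hmin (k - 1) (by omega) (i0 + 1) (by omega) e.symm
      · exact hmin (k - 1) (by omega) (i0 - 1) (by omega) e.symm
    rw [hi00] at hfi0
    have hk1 : 1 ≤ k := by omega
    have hk2 : k ≠ 1 := by
      intro e
      have h := hadjf 0
      rw [show (0 : ℕ) + 1 = 1 from rfl, ← e, ← hfi0] at h
      exact h.ne rfl
    have hkn2 : k ≠ 2 := by
      intro e
      apply hstep2 0
      rw [show (0 : ℕ) + 2 = 2 from rfl, ← e]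
      exact hfi0.symm
    have hkn3 : k ≠ 3 := by
      intro e
      have h3 : Gᶜ.Adj (f 2) (f 0) := by
        have h := hadjf 2
        rw [show (2 : ℕ) + 1 = 3 from rfl, ← e, ← hfi0] at h
        exact h
      exact htf (f 0) (f 1) (f 2) (hadjf 0) (hadjf 1) h3.symm
    have hk4 : 4 ≤ k := by omega
    have hFk : Fc k = Fc 0 := by
      have e1 : Gᶜ.Adj (f 0) (f 1) := hadjf 0
      have e2 : Gᶜ.Adj (f 0) (f (k - 1)) := by
        have h := hadjf (k - 1)
        rw [show k - 1 + 1 = k by omega, ← hfi0] at h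
        exact h.symm
      have hne : f 1 ≠ f (k - 1) := by
        intro e
        have := INJ 1 (k - 1) (by omega) (by omega) e
        omega
      have e3 : Gᶜ.Adj (f 0) (f (k + 1)) := by
        have h := hadjf k
        rw [← hfi0] at h
        exact h
      have hne2 : f (k + 1) ≠ f (k - 1) := by
        have h := hstep2 (k - 1)
        rw [show k - 1 + 2 = k + 1 by omega] at h
        exact h
      have hfk1 : f (k + 1) = f 1 := by
        rcases TWO (f 0) (hfs 0) _ _ e1 e2 hne _ e3 with e | e
        · exact e
        · exact absurd e hne2
      have hx1 : (Fc k).1 = (Fc 0).1 := hfi0.symm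
      have hx2 : (Fc k).2 = (Fc 0).2 := by
        rw [← hf1 k, ← hf1 0]
        exact hfk1
      exact Prod.ext hx1 hx2
    have hFper : ∀ n, Fc (n + k) = Fc n := by
      intro n
      induction n with
      | zero => simpa using hFk
      | succ n ihn =>
        rw [show n + 1 + k = (n + k) + 1 by omega, hFcs, hFcs, ihn]
    have hfper : ∀ n, f (n + k) = f n := fun n => by
      rw [hf]; simp only [hFper n]
    have hper : ∀ n, f (n % k) = f n := by
      intro n
      have haux : ∀ q r : ℕ, f (r + q * k) = f r := by
        intro q
        induction q with
        | zero => intro r; simp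
        | succ q ihq =>
          intro r
          rw [show r + (q + 1) * k = (r + q * k) + k by ring, hfper, ihq]
      calc f (n % k) = f (n % k + (n / k) * k) := (haux _ _).symm
        _ = f n := by rw [Nat.mod_add_div']
    have NBR : ∀ i u, Gᶜ.Adj (f i) u → u = f ((i + 1) % k) ∨ u = f ((i + k - 1) % k) := by
      intro i u hu
      have e1 : Gᶜ.Adj (f i) (f (i + 1)) := hadjf i
      have e2 : Gᶜ.Adj (f i) (f (i + k - 1)) := by
        have h := hadjf (i + k - 1)
        rw [show i + k - 1 + 1 = i + k by omega, hfper i] at h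
        exact h.symm
      have hne : f (i + 1) ≠ f (i + k - 1) := by
        intro e
        have h1 : f ((i + 1) % k) = f ((i + k - 1) % k) := by rw [hper, hper]; exact e
        have h2 := INJ _ _ (Nat.mod_lt _ (by omega)) (Nat.mod_lt _ (by omega)) h1
        have h3 : (i + 1) ≡ (i + k - 1) [MOD k] := h2
        have h5 := (Nat.modEq_iff_dvd' (by omega)).mp h3
        have h6 : i + k - 1 - (i + 1) = k - 2 := by omega
        rw [h6] at h5
        have h7 := Nat.le_of_dvd (by omega) h5
        omega
      rcases TWO (f i) (hfs i) _ _ e1 e2 hne u hu with e | e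
      · exact Or.inl (by rw [hper]; exact e)
      · exact Or.inr (by rw [hper]; exact e)
    obtain ⟨c1, F1, hg1, hc1⟩ := cycle_conf (G := G) f k hk4 hper INJ NBR
    have hRs : (Finset.range k).image f ⊆ s := by
      intro x hx
      obtain ⟨i, -, rfl⟩ := Finset.mem_image.mp hx
      exact hfs i
    have hcardR : ((Finset.range k).image f).card = k := by
      rw [Finset.card_image_of_injOn, Finset.card_range]
      intro a ha b hb e
      exact INJ a b (Finset.mem_range.mp ha) (Finset.mem_range.mp hb) e
    have hf0R : f 0 ∈ (Finset.range k).image f :=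
      Finset.mem_image.mpr ⟨0, Finset.mem_range.mpr (by omega), rfl⟩
    have hss2 : s \ (Finset.range k).image f ⊂ s :=
      (Finset.ssubset_iff_of_subset Finset.sdiff_subset).mpr
        ⟨f 0, hfs 0, by simp [hf0R]⟩
    obtain ⟨c2, F2, hg2, hc2⟩ := ih _ hss2
    have hdisj12 : ∀ a ∈ (Finset.range k).image f, a ∉ s \ (Finset.range k).image f :=
      fun a ha h => (Finset.mem_sdiff.mp h).2 ha
    have hadj12 : ∀ a ∈ (Finset.range k).image f, ∀ b ∈ s \ (Finset.range k).image f,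
        G.Adj a b := by
      intro a ha b hb
      obtain ⟨i, -, rfl⟩ := Finset.mem_image.mp ha
      have hbR : b ∉ (Finset.range k).image f := (Finset.mem_sdiff.mp hb).2
      have hne : f i ≠ b := fun e => hbR (e ▸ Finset.mem_image.mpr
        ⟨i % k, Finset.mem_range.mpr (Nat.mod_lt _ (by omega)), hper i⟩)
      refine gadj_of_not_compl hne ?_
      intro hcadj
      rcases NBR i b hcadj with e | e
      · exact hbR (e ▸ Finset.mem_image.mpr
          ⟨(i + 1) % k, Finset.mem_range.mpr (Nat.mod_lt _ (by omega)), rfl⟩)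
      · exact hbR (e ▸ Finset.mem_image.mpr
          ⟨(i + k - 1) % k, Finset.mem_range.mpr (Nat.mod_lt _ (by omega)), rfl⟩)
    obtain ⟨hgU, hcU⟩ := hg1.union hg2 hdisj12 hadj12
    refine ⟨_, _, hgU.mono ?_, ?_⟩
    · intro x hx
      rcases Finset.mem_union.mp hx with hx | hx
      · exact hRs hx
      · exact Finset.sdiff_subset hx
    · have h1 : (s \ (Finset.range k).image f).card = s.card - k := by
        rw [Finset.card_sdiff_of_subset hRs, hcardR]
      have h2 : k ≤ s.card := hcardR ▸ Finset.card_le_card hRs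
      rw [hcU]
      omega
end Main2

theorem statement9 {V : Type*} [Fintype V] (G : SimpleGraph V) [DecidableRel G.Adj]
    (hδ : (Fintype.card V : ℤ) - 3 ≤ G.minDegree) :
    (Fintype.card V + G.indepNum' - 1) / G.indepNum' ≤ G.oh := by
  classical
  have hie : G.indepNum' = Gᶜ.cliqueNum := rfl
  have hbdd : BddAbove {t | G.HasOddKMinor t} :=
    ⟨Fintype.card V, fun t ht => hasOddKMinor_le_card ht⟩
  have hle_oh : ∀ t, G.HasOddKMinor t → t ≤ G.oh := fun t ht => le_csSup hbdd ht
  have hcu : (Finset.univ : Finset V).card = Fintype.card V := Finset.card_univ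
  have hdeg : ∀ v : V, ∃ x y : V, ∀ u, Gᶜ.Adj v u → u = x ∨ u = y := by
    intro v
    set N : Finset V := Finset.univ.filter (fun u => Gᶜ.Adj v u) with hN
    set M : Finset V := Finset.univ.filter (fun u => G.Adj v u) with hM
    have hdisjNM : Disjoint N M := by
      rw [Finset.disjoint_left]
      intro u h1 h2
      rw [hN, Finset.mem_filter] at h1
      rw [hM, Finset.mem_filter] at h2
      exact ((G.compl_adj v u).mp h1.2).2 h2.2
    have hvNM : v ∉ N ∪ M := by
      intro h
      rcases Finset.mem_union.mp h with h | h
      · rw [hN, Finset.mem_filter] at h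
        exact ((G.compl_adj v v).mp h.2).1 rfl
      · rw [hM, Finset.mem_filter] at h
        exact h.2.ne rfl
    have hcover : (Finset.univ : Finset V) = insert v (N ∪ M) := by
      ext u
      simp only [Finset.mem_univ, true_iff, Finset.mem_insert, Finset.mem_union, hN, hM,
        Finset.mem_filter, true_and]
      by_cases h1 : u = v
      · exact Or.inl h1
      · by_cases h2 : G.Adj v u
        · exact Or.inr (Or.inr h2)
        · exact Or.inr (Or.inl ((G.compl_adj v u).mpr ⟨fun e => h1 e.symm, h2⟩))
    have hpart : N.card + M.card + 1 = Fintype.card V := by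
      rw [← hcu, hcover, Finset.card_insert_of_notMem hvNM,
        Finset.card_union_of_disjoint hdisjNM]
    have hMdeg : M.card = G.degree v := by
      have h : M = G.neighborFinset v := by
        ext u; simp [hM, SimpleGraph.mem_neighborFinset]
      rw [h]; rfl
    have hmd := G.minDegree_le_degree v
    have hsub : ∀ u, Gᶜ.Adj v u → u ∈ N := fun u hu => by
      rw [hN]; exact Finset.mem_filter.mpr ⟨Finset.mem_univ _, hu⟩
    rcases (by omega : N.card = 0 ∨ N.card = 1 ∨ N.card = 2) with h | h | h
    · rw [Finset.card_eq_zero] at h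
      exact ⟨v, v, fun u hu => absurd (h ▸ hsub u hu) (Finset.notMem_empty u)⟩
    · obtain ⟨x, hx⟩ := Finset.card_eq_one.mp h
      refine ⟨x, x, fun u hu => ?_⟩
      have := hsub u hu
      rw [hx, Finset.mem_singleton] at this
      exact Or.inl this
    · obtain ⟨x, y, hxy, hx⟩ := Finset.card_eq_two.mp h
      refine ⟨x, y, fun u hu => ?_⟩
      have := hsub u hu
      rw [hx] at this
      simpa using this
  have cliq2 : ∀ a b : V, Gᶜ.Adj a b → 2 ≤ G.indepNum' := by
    intro a b hab
    have hcl : Gᶜ.IsNClique 2 {a, b} := by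
      refine ⟨?_, Finset.card_pair hab.ne⟩
      intro x hx y hy hxy
      simp only [Finset.coe_insert, Set.mem_insert_iff, Finset.coe_singleton,
        Set.mem_singleton_iff] at hx hy
      rcases hx with rfl | rfl <;> rcases hy with rfl | rfl
      · exact absurd rfl hxy
      · exact hab
      · exact hab.symm
      · exact absurd rfl hxy
    calc 2 = ({a, b} : Finset V).card := (Finset.card_pair hab.ne).symm
      _ ≤ Gᶜ.cliqueNum := SimpleGraph.IsClique.card_le_cliqueNum (tc := hcl.isClique)
  have cliq3 : ∀ a b c : V, Gᶜ.Adj a b → Gᶜ.Adj b c → Gᶜ.Adj a c → 3 ≤ G.indepNum' := by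
    intro a b c h1 h2 h3
    have hcl : Gᶜ.IsNClique 3 {a, b, c} := SimpleGraph.is3Clique_triple_iff.mpr ⟨h1, h3, h2⟩
    calc 3 = ({a, b, c} : Finset V).card := hcl.card_eq.symm
      _ ≤ Gᶜ.cliqueNum := SimpleGraph.IsClique.card_le_cliqueNum (tc := hcl.isClique)
  have hα3 : G.indepNum' ≤ 3 := by
    by_contra hcon
    obtain ⟨t, ht⟩ := Gᶜ.exists_isNClique_cliqueNum
    have htc : 4 ≤ t.card := by rw [ht.card_eq]; omega
    obtain ⟨a, ha⟩ := Finset.card_pos.mp (by omega : 0 < t.card)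
    obtain ⟨x, y, hxy⟩ := hdeg a
    have hsub : t.erase a ⊆ {x, y} := by
      intro b hb
      have hbt := Finset.mem_of_mem_erase hb
      have hbne := Finset.ne_of_mem_erase hb
      have hadj : Gᶜ.Adj a b := ht.isClique ha hbt (fun e => hbne e.symm)
      rcases hxy b hadj with rfl | rfl
      · exact Finset.mem_insert_self _ _
      · exact Finset.mem_insert_of_mem (Finset.mem_singleton_self _)
    have h1 : t.card - 1 ≤ 2 := by
      calc t.card - 1 = (t.erase a).card := (Finset.card_erase_of_mem ha).symm
        _ ≤ ({x, y} : Finset V).card := Finset.card_le_card hsub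
        _ ≤ 2 := Finset.card_le_two
    omega
  rcases (by omega : G.indepNum' = 0 ∨ G.indepNum' = 1 ∨ G.indepNum' = 2 ∨ G.indepNum' = 3)
    with h0 | h1 | h2 | h3
  · rw [h0, Nat.div_zero]
    exact Nat.zero_le _
  · have hnoe : ∀ a ∈ (Finset.univ : Finset V), ∀ b ∈ (Finset.univ : Finset V),
        a ≠ b → G.Adj a b := by
      intro a _ b _ hne
      refine gadj_of_not_compl hne (fun h => ?_)
      have := cliq2 _ _ h
      omega
    obtain ⟨hg, hcard⟩ := goodF_indep (G := G) hnoe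
    have hm := hg.hasOddKMinor
    rw [hcard, hcu] at hm
    refine le_trans ?_ (hle_oh _ hm)
    rw [h1]
    omega
  · have htf : ∀ a b c : V, Gᶜ.Adj a b → Gᶜ.Adj b c → Gᶜ.Adj a c → False := by
      intro a b c ha hb hc
      have := cliq3 a b c ha hb hc
      omega
    obtain ⟨c, F, hg, hcard⟩ := main2 G hdeg htf Finset.univ
    have hm := hg.hasOddKMinor
    refine le_trans ?_ (hle_oh _ hm)
    rw [h2, hcu] at *
    omega
  · obtain ⟨T, hTs, hTind, hTcard⟩ := greedy_indep Gᶜ hdeg Finset.univ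
    obtain ⟨hg, hcard⟩ := goodF_indep (G := G)
      (fun a ha b hb hne => gadj_of_not_compl hne (hTind a ha b hb hne))
    have hm := hg.hasOddKMinor
    rw [hcard] at hm
    refine le_trans ?_ (hle_oh _ hm)
    rw [h3, hcu] at *
    omega
end

section
/- Let G be a graph on n vertices with independence number α(G) ≤ 2 such that oh(G) < ⌈n/2⌉, and such that every proper induced subgraph G′ of G satisfies oh(G′) ≥ ⌈|G′|/2⌉. Then the minimum degree satisfies δ(G) ≤ n − 4 and the maximum degree satisfies Δ(G) ≤ n − 3. -/
open SimpleGraph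

section Aux
variable {V : Type*}

lemma hasOddKMinor_zero (G : SimpleGraph V) : G.HasOddKMinor 0 :=
  ⟨fun _ => true, fun i => i.elim0, fun i => i.elim0, fun i => i.elim0,
    fun i => i.elim0, fun i => i.elim0⟩

lemma SimpleGraph.HasOddKMinor.mono {G : SimpleGraph V} {s t : ℕ}
    (h : G.HasOddKMinor t) (hst : s ≤ t) : G.HasOddKMinor s := by
  obtain ⟨c, B, h1, h2, h3, h4⟩ := h
  refine ⟨c, fun i => B (Fin.castLE hst i), fun i => h1 _, ?_, fun i => h3 _, ?_⟩
  · intro i j hij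
    exact h2 fun hc => hij (Fin.castLE_injective hst hc)
  · intro i j hij
    exact h4 _ _ fun hc => hij (Fin.castLE_injective hst hc)

lemma SimpleGraph.HasOddKMinor.le_card [Fintype V] {G : SimpleGraph V} {t : ℕ}
    (h : G.HasOddKMinor t) : t ≤ Fintype.card V := by
  obtain ⟨c, B, h1, h2, -, -⟩ := h
  choose x hx using h1
  have hinj : Function.Injective x := by
    intro i j hij
    by_contra hne
    exact Set.disjoint_left.mp (h2 hne) (hx i) (hij ▸ hx j)
  simpa using Fintype.card_le_of_injective x hinj

lemma bddAbove_hasOddKMinor [Fintype V] (G : SimpleGraph V) :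
    BddAbove {t | G.HasOddKMinor t} :=
  ⟨Fintype.card V, fun _ ht => ht.le_card⟩

lemma hasOddKMinor_oh [Fintype V] (G : SimpleGraph V) : G.HasOddKMinor G.oh := by
  have hne : Set.Nonempty {t | G.HasOddKMinor t} := ⟨0, hasOddKMinor_zero G⟩
  exact Nat.sSup_mem hne (bddAbove_hasOddKMinor G)

lemma le_oh_of_hasOddKMinor [Fintype V] {G : SimpleGraph V} {t : ℕ}
    (h : G.HasOddKMinor t) : t ≤ G.oh :=
  le_csSup (bddAbove_hasOddKMinor G) h

lemma hasOddKMinor_of_le_oh [Fintype V] {G : SimpleGraph V} {t : ℕ}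
    (h : t ≤ G.oh) : G.HasOddKMinor t :=
  (hasOddKMinor_oh G).mono h

lemma connected_induce_singleton (G' : SimpleGraph V) (v : V) :
    (G'.induce {v}).Connected := by
  haveI : Nonempty ↥({v} : Set V) := ⟨⟨v, rfl⟩⟩
  refine SimpleGraph.Connected.mk ?_
  intro a b
  have : a = b := Subtype.ext (a.2.trans b.2.symm)
  exact this ▸ SimpleGraph.Reachable.refl _

lemma connected_induce_pair {G' : SimpleGraph V} {a b : V} (h : G'.Adj a b) :
    (G'.induce {a, b}).Connected := by
  have ha : a ∈ ({a, b} : Set V) := Or.inl rfl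
  have hb : b ∈ ({a, b} : Set V) := Or.inr rfl
  have hadj : (G'.induce {a, b}).Adj ⟨a, ha⟩ ⟨b, hb⟩ := h
  haveI : Nonempty ↥({a, b} : Set V) := ⟨⟨a, ha⟩⟩
  refine SimpleGraph.Connected.mk ?_
  intro x y
  have hx : x = ⟨a, ha⟩ ∨ x = ⟨b, hb⟩ := by
    rcases x.2 with h' | h'
    · exact Or.inl (Subtype.ext h')
    · exact Or.inr (Subtype.ext h')
  have hy : y = ⟨a, ha⟩ ∨ y = ⟨b, hb⟩ := by
    rcases y.2 with h' | h'
    · exact Or.inl (Subtype.ext h')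
    · exact Or.inr (Subtype.ext h')
  rcases hx with rfl | rfl <;> rcases hy with rfl | rfl
  · exact SimpleGraph.Reachable.refl _
  · exact hadj.reachable
  · exact hadj.symm.reachable
  · exact SimpleGraph.Reachable.refl _

lemma both_colors {G' : SimpleGraph V} {c : V → Bool} {B : Set V}
    (h : ((G'.bichromaticSubgraph c).induce B).Connected)
    {y z : V} (hy : y ∈ B) (hz : z ∈ B) (hyz : y ≠ z) (bb : Bool) :
    ∃ w ∈ B, c w = bb := by
  by_contra hcon
  push_neg at hcon
  have hall : ∀ w ∈ B, c w = !bb := by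
    intro w hw
    cases hcw : c w
    · cases bb
      · exact absurd hcw (hcon w hw)
      · rfl
    · cases bb
      · rfl
      · exact absurd hcw (hcon w hw)
  obtain ⟨p⟩ := h.preconnected ⟨y, hy⟩ ⟨z, hz⟩
  cases p with
  | nil => exact hyz rfl
  | cons hadj p' =>
    have h2 : c y ≠ c _ := hadj.2
    exact h2 ((hall _ hy).trans (hall _ (Subtype.mem _)).symm)
end Aux

section Main
variable {V : Type*}

@[simp] lemma bichromaticSubgraph_adj (G : SimpleGraph V) (c : V → Bool) (u v : V) :
    (G.bichromaticSubgraph c).Adj u v ↔ G.Adj u v ∧ c u ≠ c v := Iff.rfl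

lemma beq_ne_beq (x y b : Bool) : ((x == b) ≠ (y == b)) ↔ x ≠ y := by
  revert x y b; decide

lemma main_ext (G : SimpleGraph V) (s : Set V) {t m : ℕ}
    (hst : (G.induce s).HasOddKMinor t)
    (N : Fin m → Set V) (D : Fin m → V) (cN : V → Bool)
    (hNs : ∀ i, ∀ x ∈ N i, x ∉ s)
    (hDN : ∀ i, D i ∈ N i)
    (hNdisj : Pairwise fun i j => Disjoint (N i) (N j))
    (hDc : ∀ i, cN (D i) = true)
    (hdom : ∀ i, ∀ y ∈ s, G.Adj (D i) y)
    (hNconn : ∀ i, ((G.bichromaticSubgraph cN).induce (N i)).Connected)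
    (hNcross : ∀ i j, i ≠ j → ∃ u ∈ N i, ∃ x ∈ N j, G.Adj u x ∧ cN u = cN x) :
    G.HasOddKMinor (t + m) := by
  classical
  obtain ⟨c, B, hBne, hBdisj, hBconn, hBcross⟩ := hst
  obtain ⟨b, hb⟩ : ∃ b : Bool, ∀ i, ∃ w ∈ B i, c w = b := by
    by_cases hsing : ∃ i x, B i ⊆ {x}
    · obtain ⟨i₀, x₀, hx₀⟩ := hsing
      have hx₀mem : x₀ ∈ B i₀ := by
        obtain ⟨y, hy⟩ := hBne i₀
        have h' : y = x₀ := hx₀ hy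
        exact h' ▸ hy
      refine ⟨c x₀, fun j => ?_⟩
      by_cases hj : ∃ x, B j ⊆ {x}
      · by_cases hij : j = i₀
        · exact ⟨x₀, hij ▸ hx₀mem, rfl⟩
        · obtain ⟨u, hu, w, hw, _, hcu⟩ := hBcross i₀ j fun h => hij h.symm
          have hux : u = x₀ := hx₀ hu
          exact ⟨w, hw, by rw [← hcu, hux]⟩
      · push_neg at hj
        obtain ⟨y, hy⟩ := hBne j
        obtain ⟨z, hz, hzy⟩ : ∃ z ∈ B j, z ≠ y := by
          by_contra hc
          push_neg at hc
          exact hj y fun w hw => hc w hw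
        exact both_colors (hBconn j) hz hy hzy (c x₀)
    · push_neg at hsing
      refine ⟨true, fun j => ?_⟩
      obtain ⟨y, hy⟩ := hBne j
      obtain ⟨z, hz, hzy⟩ : ∃ z ∈ B j, z ≠ y := by
        by_contra hc
        push_neg at hc
        exact hsing j y fun w hw => hc w hw
      exact both_colors (hBconn j) hz hy hzy true
  set cF : V → Bool := fun x => if hx : x ∈ s then c ⟨x, hx⟩ else (cN x == b) with hcFdef
  have hcFs : ∀ (x : ↥s), cF x.val = c x := by
    intro x
    simp only [cF, x.2, dif_pos, Subtype.coe_eta]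
  have hcFn : ∀ x ∉ s, cF x = (cN x == b) := fun x hx => dif_neg hx
  set BF : Fin (t + m) → Set V :=
    Fin.addCases (fun i => Subtype.val '' B i) (fun j => N j) with hBFdef
  have hBFl : ∀ i : Fin t, BF (Fin.castAdd m i) = Subtype.val '' B i := fun i => by
    simp [BF]
  have hBFr : ∀ j : Fin m, BF (Fin.natAdd t j) = N j := fun j => by
    simp only [BF]
    rw [Fin.addCases_right]
  have hcase : ∀ k : Fin (t + m), (∃ i, k = Fin.castAdd m i) ∨ (∃ j, k = Fin.natAdd t j) := by
    intro k
    rcases lt_or_ge k.val t with h | h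
    · exact Or.inl ⟨⟨k.val, h⟩, Fin.ext rfl⟩
    · refine Or.inr ⟨⟨k.val - t, by omega⟩, Fin.ext ?_⟩
      simp only [Fin.natAdd]
      omega
  have hNnotins : ∀ j (x : V), x ∈ N j → x ∉ s := fun j x hx => hNs j x hx
  refine ⟨cF, BF, ?_, ?_, ?_, ?_⟩
  · intro k
    rcases hcase k with ⟨i, rfl⟩ | ⟨j, rfl⟩
    · rw [hBFl]; exact (hBne i).image _
    · rw [hBFr]; exact ⟨D j, hDN j⟩
  · have himdisj : ∀ i i' : Fin t, i ≠ i' →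
        Disjoint (Subtype.val '' B i) (Subtype.val '' B i') := by
      intro i i' hne
      rw [Set.disjoint_left]
      rintro a ⟨p, hp, rfl⟩ ⟨q, hq, hq'⟩
      cases Subtype.val_injective hq'
      exact Set.disjoint_left.mp (hBdisj hne) hp hq
    have hmix : ∀ (i : Fin t) (j : Fin m), Disjoint (Subtype.val '' B i) (N j) := by
      intro i j
      rw [Set.disjoint_left]
      rintro a ⟨p, hp, rfl⟩ haN
      exact hNnotins j _ haN p.2
    intro k l hkl
    rcases hcase k with ⟨i, rfl⟩ | ⟨j, rfl⟩ <;> rcases hcase l with ⟨i', rfl⟩ | ⟨j', rfl⟩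
    · rw [hBFl, hBFl]
      refine himdisj i i' fun h => hkl (by rw [h])
    · rw [hBFl, hBFr]; exact hmix i j'
    · rw [hBFr, hBFl]; exact (hmix i' j).symm
    · rw [hBFr, hBFr]
      refine hNdisj fun h => hkl (by rw [h])
  · intro k
    rcases hcase k with ⟨i, rfl⟩ | ⟨j, rfl⟩
    · rw [hBFl]
      set f : ↥(B i) → ↥(Subtype.val '' B i) :=
        fun p => ⟨p.val.val, ⟨p.val, p.2, rfl⟩⟩ with hfdef
      have hf : ∀ p q : ↥(B i),
          ((((G.induce s).bichromaticSubgraph c).induce (B i)).Adj p q) →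
          (((G.bichromaticSubgraph cF).induce (Subtype.val '' B i)).Adj (f p) (f q)) := by
        intro p q hpq
        obtain ⟨hadj, hc⟩ := hpq
        refine ⟨hadj, ?_⟩
        show cF ((p : ↥s) : V) ≠ cF ((q : ↥s) : V)
        rw [hcFs, hcFs]
        exact hc
      have hsurj : Function.Surjective f := by
        rintro ⟨a, p, hp, rfl⟩
        exact ⟨⟨p, hp⟩, rfl⟩
      exact SimpleGraph.Connected.map ⟨f, hf _ _⟩ hsurj (hBconn i)
    · rw [hBFr]
      have hEq : (G.bichromaticSubgraph cF).induce (N j)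
          = (G.bichromaticSubgraph cN).induce (N j) := by
        ext a b
        simp only [SimpleGraph.comap_adj, Function.Embedding.coe_subtype,
          bichromaticSubgraph_adj]
        rw [hcFn _ (hNnotins j _ a.2), hcFn _ (hNnotins j _ b.2), beq_ne_beq]
      rw [hEq]
      exact hNconn j
  · intro k l hkl
    rcases hcase k with ⟨i, rfl⟩ | ⟨j, rfl⟩ <;> rcases hcase l with ⟨i', rfl⟩ | ⟨j', rfl⟩
    · have hne : i ≠ i' := fun h => hkl (by rw [h])
      obtain ⟨u, hu, w, hw, hadj, hcu⟩ := hBcross i i' hne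
      refine ⟨u.val, ?_, w.val, ?_, hadj, ?_⟩
      · rw [hBFl]; exact ⟨u, hu, rfl⟩
      · rw [hBFl]; exact ⟨w, hw, rfl⟩
      · rw [hcFs u, hcFs w]; exact hcu
    · obtain ⟨⟨wv, hwvs⟩, hw, hcw⟩ := hb i
      refine ⟨wv, ?_, D j', ?_, (hdom j' wv hwvs).symm, ?_⟩
      · rw [hBFl]; exact ⟨⟨wv, hwvs⟩, hw, rfl⟩
      · rw [hBFr]; exact hDN j'
      · rw [hcFs ⟨wv, hwvs⟩, hcw, hcFn _ (hNnotins j' _ (hDN j')), hDc j']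
        cases b <;> rfl
    · obtain ⟨⟨wv, hwvs⟩, hw, hcw⟩ := hb i'
      refine ⟨D j, ?_, wv, ?_, hdom j wv hwvs, ?_⟩
      · rw [hBFr]; exact hDN j
      · rw [hBFl]; exact ⟨⟨wv, hwvs⟩, hw, rfl⟩
      · rw [hcFs ⟨wv, hwvs⟩, hcw, hcFn _ (hNnotins j _ (hDN j)), hDc j]
        cases b <;> rfl
    · have hne : j ≠ j' := fun h => hkl (by rw [h])
      obtain ⟨u, hu, x, hx, hadj, hcu⟩ := hNcross j j' hne
      refine ⟨u, ?_, x, ?_, hadj, ?_⟩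
      · rw [hBFr]; exact hu
      · rw [hBFr]; exact hx
      · rw [hcFn _ (hNnotins j _ hu), hcFn _ (hNnotins j' _ hx), hcu]

end Main

set_option maxHeartbeats 1000000

section Helpers
variable {V : Type*}

lemma adj_of_not_compl_adj {G : SimpleGraph V} {a b : V} (hne : a ≠ b)
    (h : ¬ Gᶜ.Adj a b) : G.Adj a b := by
  by_contra hG
  exact h ((SimpleGraph.compl_adj G a b).mpr ⟨hne, hG⟩)

lemma no_triangle [Fintype V] {G : SimpleGraph V} (hα : Gᶜ.cliqueNum ≤ 2)
    {a b c : V} (hab : Gᶜ.Adj a b) (hac : Gᶜ.Adj a c) (hbc : Gᶜ.Adj b c) : False := by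
  classical
  have hclique : Gᶜ.IsClique (({a, b, c} : Finset V) : Set V) := by
    intro x hx y hy hxy
    simp only [Finset.coe_insert, Set.mem_insert_iff, Finset.coe_singleton,
      Set.mem_singleton_iff] at hx hy
    rcases hx with rfl | rfl | rfl <;> rcases hy with rfl | rfl | rfl <;>
      first
        | exact absurd rfl hxy
        | assumption
        | exact hab.symm
        | exact hac.symm
        | exact hbc.symm
  have hcard : ({a, b, c} : Finset V).card = 3 := by
    rw [Finset.card_insert_of_notMem (by simp [hab.ne, hac.ne]),
      Finset.card_insert_of_notMem (by simp [hbc.ne]), Finset.card_singleton]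
  have hle : ({a, b, c} : Finset V).card ≤ Gᶜ.cliqueNum :=
    SimpleGraph.IsClique.card_le_cliqueNum (tc := hclique)
  omega

lemma nb_char {H : SimpleGraph V} [Fintype V] [DecidableRel H.Adj] {v a b : V}
    (hcard : H.degree v = 2) (hab : a ≠ b) (ha : H.Adj v a) (hb : H.Adj v b) :
    ∀ x, H.Adj v x ↔ x = a ∨ x = b := by
  classical
  intro x
  have hsub : ({a, b} : Finset V) ⊆ H.neighborFinset v := by
    intro y hy
    rcases Finset.mem_insert.mp hy with rfl | hy
    · exact (H.mem_neighborFinset v y).mpr ha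
    · rw [Finset.mem_singleton] at hy
      rw [hy]
      exact (H.mem_neighborFinset v b).mpr hb
  have hcard2 : ({a, b} : Finset V).card = 2 := by
    rw [Finset.card_insert_of_notMem (by simp [hab]), Finset.card_singleton]
  have heq : H.neighborFinset v = {a, b} :=
    (Finset.eq_of_subset_of_card_le hsub (by rw [hcard2]; exact le_of_eq hcard)).symm
  rw [← H.mem_neighborFinset, heq]
  simp

end Helpers

theorem statement11 {V : Type*} [Fintype V] (G : SimpleGraph V) [DecidableRel G.Adj]
    (hα : G.indepNum' ≤ 2) (hoh : G.oh < (Fintype.card V + 1) / 2)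
    (hmin : ∀ s : Finset V, s ≠ Finset.univ →
      (s.card + 1) / 2 ≤ (G.induce (s : Set V)).oh) :
    (G.minDegree : ℤ) ≤ (Fintype.card V : ℤ) - 4 ∧
      (G.maxDegree : ℤ) ≤ (Fintype.card V : ℤ) - 3 := by
  classical
  set n := Fintype.card V with hn
  rw [SimpleGraph.indepNum'] at hα
  have hn1 : 1 ≤ n := by
    rcases Nat.eq_zero_or_pos n with h0 | h
    · rw [h0] at hoh; norm_num at hoh
    · exact h
  haveI hnemp : Nonempty V := Fintype.card_pos_iff.mp hn1
  have h1 : G.HasOddKMinor 1 := by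
    obtain ⟨v⟩ := hnemp
    refine ⟨fun _ => true, fun _ => {v}, fun _ => ⟨v, rfl⟩, ?_, ?_, ?_⟩
    · intro i j hij; exact absurd (Subsingleton.elim i j) hij
    · intro _; exact connected_induce_singleton _ v
    · intro i j hij; exact absurd (Subsingleton.elim i j) hij
  have hn3 : 3 ≤ n := by
    have := le_oh_of_hasOddKMinor h1
    omega
  have hedge : ∃ a b, G.Adj a b := by
    by_contra h
    push_neg at h
    have hcu : (Finset.univ : Finset V).card = n := Finset.card_univ
    obtain ⟨a, -, b, -, hab⟩ := Finset.one_lt_card.mp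
      (by omega : 1 < (Finset.univ : Finset V).card)
    have hc2 : (({a, b} : Finset V)).card ≤ 2 :=
      (Finset.card_insert_le _ _).trans (by simp)
    have hne2 : ((Finset.univ \ ({a, b} : Finset V))).Nonempty := by
      refine Finset.card_pos.mp ?_
      rw [Finset.card_sdiff_of_subset (Finset.subset_univ _)]
      omega
    obtain ⟨c, hcmem⟩ := hne2
    rw [Finset.mem_sdiff] at hcmem
    have hc := hcmem.2
    simp only [Finset.mem_insert, Finset.mem_singleton, not_or] at hc
    exact no_triangle hα ((G.compl_adj a b).mpr ⟨hab, h a b⟩)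
      ((G.compl_adj a c).mpr ⟨fun hh => hc.1 hh.symm, h a c⟩)
      ((G.compl_adj b c).mpr ⟨fun hh => hc.2 hh.symm, h b c⟩)
  have h2 : G.HasOddKMinor 2 := by
    obtain ⟨a, b, hab⟩ := hedge
    refine ⟨fun _ => true, fun i => if i = 0 then {a} else {b}, ?_, ?_, ?_, ?_⟩
    · intro i
      by_cases hi : i = 0 <;> simp [hi]
    · intro i j hij
      have : (i = 0 ∧ j = 1) ∨ (i = 1 ∧ j = 0) := by omega
      rcases this with ⟨rfl, rfl⟩ | ⟨rfl, rfl⟩ <;> simp [hab.ne, hab.ne']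
    · intro i
      by_cases hi : i = 0
      · have he : (fun i : Fin 2 => if i = 0 then ({a} : Set V) else {b}) i = {a} := by
          rw [hi]; simp
        rw [he]; exact connected_induce_singleton _ _
      · have he : (fun i : Fin 2 => if i = 0 then ({a} : Set V) else {b}) i = {b} := by
          simp only [if_neg hi]
        rw [he]; exact connected_induce_singleton _ _
    · intro i j hij
      have : (i = 0 ∧ j = 1) ∨ (i = 1 ∧ j = 0) := by omega
      rcases this with ⟨rfl, rfl⟩ | ⟨rfl, rfl⟩
      · exact ⟨a, by simp, b, by simp, hab, rfl⟩
      · exact ⟨b, by simp, a, by simp, hab.symm, rfl⟩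
  have hn5 : 5 ≤ n := by
    have := le_oh_of_hasOddKMinor h2
    omega
  -- Part 1: all degrees ≤ n - 3
  have hdeg3 : ∀ v, G.degree v ≤ n - 3 := by
    intro v
    by_contra hv
    push_neg at hv
    set s : Finset V := G.neighborFinset v with hs
    have hvnots : v ∉ s := G.notMem_neighborFinset_self v
    have hsne : s ≠ Finset.univ := fun h => hvnots (h ▸ Finset.mem_univ v)
    have hohs := hmin s hsne
    haveI : Fintype ↥((s : Set V)) := FinsetCoe.fintype s
    have hHas : (G.induce (s : Set V)).HasOddKMinor ((s.card + 1) / 2) :=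
      hasOddKMinor_of_le_oh hohs
    have hext := main_ext G (s : Set V) hHas (fun _ : Fin 1 => ({v} : Set V))
      (fun _ => v) (fun _ => true)
      (by rintro i x rfl hxs
          exact hvnots hxs)
      (fun i => rfl)
      (by intro i j hij; exact absurd (Subsingleton.elim i j) hij)
      (fun i => rfl)
      (by intro i y hy
          exact (G.mem_neighborFinset v y).mp hy)
      (fun i => connected_induce_singleton _ v)
      (by intro i j hij; exact absurd (Subsingleton.elim i j) hij)
    have hfin := le_oh_of_hasOddKMinor hext
    have hscard : s.card = G.degree v := rfl
    have hdle : G.degree v ≤ n - 1 := by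
      have := G.degree_le_maxDegree v
      have h2 := SimpleGraph.maxDegree_le_of_forall_degree_le
        (G := G) (n - 1) (fun w => by
          have := SimpleGraph.degree_lt_card_verts (G := G) w
          omega)
      omega
    omega
  -- Part 2: some degree ≤ n - 4
  have hdelta : ∃ v, G.degree v ≤ n - 4 := by
    by_contra hcon
    push_neg at hcon
    have hdeg : ∀ v, G.degree v = n - 3 := fun v =>
      le_antisymm (hdeg3 v) (by have := hcon v; omega)
    have hH2 : ∀ v, Gᶜ.degree v = 2 := by
      intro v
      rw [SimpleGraph.degree_compl, hdeg v]
      omega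
    -- two distinct neighbours in the complement, with characterization
    have two_nbrs : ∀ v : V, ∃ a b : V, a ≠ b ∧ (∀ x, Gᶜ.Adj v x ↔ x = a ∨ x = b) := by
      intro v
      obtain ⟨a, b, hab, hnb⟩ := Finset.card_eq_two.mp (hH2 v)
      refine ⟨a, b, hab, fun x => ?_⟩
      rw [← SimpleGraph.mem_neighborFinset, hnb]
      simp
    obtain ⟨v⟩ := hnemp
    obtain ⟨u₁, w₁, hu₁w₁, hvnb⟩ := two_nbrs v
    have hadj_vu : Gᶜ.Adj v u₁ := (hvnb u₁).mpr (Or.inl rfl)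
    have hadj_vw : Gᶜ.Adj v w₁ := (hvnb w₁).mpr (Or.inr rfl)
    have hnadj_uw : ¬ Gᶜ.Adj u₁ w₁ := fun h => no_triangle hα hadj_vu hadj_vw h
    -- the other neighbour u' of u₁
    obtain ⟨a, b, hab, hu₁nb0⟩ := two_nbrs u₁
    have hvmem : v = a ∨ v = b := (hu₁nb0 v).mp hadj_vu.symm
    set u' : V := if v = a then b else a with hu'def
    have hu₁nb : ∀ x, Gᶜ.Adj u₁ x ↔ x = v ∨ x = u' := by
      intro x
      rw [hu₁nb0 x]
      rcases hvmem with hv' | hv'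
      · rw [hu'def, if_pos hv', ← hv']
      · have hvna : v ≠ a := fun h => hab (h ▸ hv')
        rw [hu'def, if_neg hvna, ← hv', or_comm]
    have hadj_uu' : Gᶜ.Adj u₁ u' := (hu₁nb u').mpr (Or.inr rfl)
    have hu'v : u' ≠ v := by
      rcases hvmem with hv' | hv'
      · rw [hu'def, if_pos hv']
        exact fun h => hab (hv'.symm.trans h.symm)
      · have hvna : v ≠ a := fun h => hab (h ▸ hv')
        rw [hu'def, if_neg hvna]
        exact fun h => hvna h.symm
    have hu'u₁ : u' ≠ u₁ := hadj_uu'.ne'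
    have hu'w₁ : u' ≠ w₁ := by
      intro h
      exact hnadj_uw (h ▸ hadj_uu')
    have hvu₁ : v ≠ u₁ := hadj_vu.ne
    have hvw₁ : v ≠ w₁ := hadj_vw.ne
    have hnadj_vu' : ¬ Gᶜ.Adj v u' := by
      intro h
      rcases (hvnb u').mp h with h' | h'
      · exact hu'u₁ h'
      · exact hu'w₁ h'
    have hGvu' : G.Adj v u' := adj_of_not_compl_adj (Ne.symm hu'v) hnadj_vu'
    have hGuw : G.Adj u₁ w₁ := adj_of_not_compl_adj hu₁w₁ hnadj_uw
    by_cases hB : Gᶜ.Adj u' w₁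
    case neg =>
      -- Case A
      set R : Finset V := {v, u₁, u', w₁} with hR
      set s : Finset V := Finset.univ \ R with hsdef
      have hmemR : ∀ x, x ∈ R ↔ x = v ∨ x = u₁ ∨ x = u' ∨ x = w₁ := by
        intro x; simp [hR]
      have hsmem : ∀ x, x ∈ s ↔ ¬(x = v ∨ x = u₁ ∨ x = u' ∨ x = w₁) := by
        intro x; rw [hsdef, Finset.mem_sdiff, hmemR]; simp
      have hsnuniv : s ≠ Finset.univ := by
        intro h
        have : v ∈ s := h ▸ Finset.mem_univ v
        rw [hsmem] at this
        exact this (Or.inl rfl)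
      have hohs := hmin s hsnuniv
      haveI : Fintype ↥((s : Set V)) := FinsetCoe.fintype s
      have hHas : (G.induce (s : Set V)).HasOddKMinor ((s.card + 1) / 2) :=
        hasOddKMinor_of_le_oh hohs
      set cN : V → Bool := fun x => if x = v ∨ x = u₁ then true else false with hcN
      have hcNv : cN v = true := by rw [hcN]; simp
      have hcNu₁ : cN u₁ = true := by rw [hcN]; simp
      have hcNu' : cN u' = false := by rw [hcN]; simp [hu'v, hu'u₁]
      have hcNw₁ : cN w₁ = false := by
        rw [hcN]; simp [Ne.symm hvw₁, Ne.symm hu₁w₁]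
      have hGu'w : G.Adj u' w₁ := adj_of_not_compl_adj hu'w₁ hB
      have hsmem' : ∀ x, x ∈ ((s : Set V)) ↔ ¬(x = v ∨ x = u₁ ∨ x = u' ∨ x = w₁) :=
        fun x => by rw [Finset.mem_coe]; exact hsmem x
      have hext := main_ext G (s : Set V) hHas
        ![({v, u'} : Set V), ({u₁, w₁} : Set V)] ![v, u₁] cN
        (by intro i x hx hxs
            have hns := (hsmem' x).mp hxs
            apply hns
            fin_cases i
            · rcases (hx : x ∈ ({v, u'} : Set V)) with rfl | rfl <;> tauto
            · rcases (hx : x ∈ ({u₁, w₁} : Set V)) with rfl | rfl <;> tauto)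
        (by intro i
            fin_cases i
            · exact (Or.inl rfl : v ∈ ({v, u'} : Set V))
            · exact (Or.inl rfl : u₁ ∈ ({u₁, w₁} : Set V)))
        (by intro i j hij
            fin_cases i <;> fin_cases j <;>
              [exact absurd rfl hij; skip; skip; exact absurd rfl hij]
            · show Disjoint ({v, u'} : Set V) ({u₁, w₁} : Set V)
              rw [Set.disjoint_left]
              rintro x (rfl | rfl) (rfl | rfl)
              · exact hvu₁ rfl
              · exact hvw₁ rfl
              · exact hu'u₁ rfl
              · exact hu'w₁ rfl
            · show Disjoint ({u₁, w₁} : Set V) ({v, u'} : Set V)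
              rw [Set.disjoint_left]
              rintro x (rfl | rfl) (rfl | rfl)
              · exact hvu₁ rfl
              · exact hu'u₁ rfl
              · exact hvw₁ rfl
              · exact hu'w₁ rfl)
        (by intro i
            fin_cases i
            · exact hcNv
            · exact hcNu₁)
        (by intro i y hy
            have hns := (hsmem' y).mp hy
            push_neg at hns
            obtain ⟨h1', h2', h3', h4'⟩ := hns
            fin_cases i
            · refine adj_of_not_compl_adj (Ne.symm h1') ?_
              intro hadj
              rcases (hvnb y).mp hadj with rfl | rfl
              · exact h2' rfl
              · exact h4' rfl
            · refine adj_of_not_compl_adj (Ne.symm h2') ?_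
              intro hadj
              rcases (hu₁nb y).mp hadj with rfl | rfl
              · exact h1' rfl
              · exact h3' rfl)
        (by intro i
            fin_cases i
            · refine connected_induce_pair ⟨hGvu', ?_⟩
              rw [hcNv, hcNu']
              simp
            · refine connected_induce_pair ⟨hGuw, ?_⟩
              rw [hcNu₁, hcNw₁]
              simp)
        (by intro i j hij
            fin_cases i <;> fin_cases j
            · exact absurd rfl hij
            · refine ⟨u', ?_, w₁, ?_, hGu'w, by rw [hcNu', hcNw₁]⟩
              · show u' ∈ ({v, u'} : Set V)
                exact Or.inr rfl
              · show w₁ ∈ ({u₁, w₁} : Set V)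
                exact Or.inr rfl
            · refine ⟨w₁, ?_, u', ?_, hGu'w.symm, by rw [hcNu', hcNw₁]⟩
              · show w₁ ∈ ({u₁, w₁} : Set V)
                exact Or.inr rfl
              · show u' ∈ ({v, u'} : Set V)
                exact Or.inr rfl
            · exact absurd rfl hij)
      have hfin := le_oh_of_hasOddKMinor hext
      have hRcard : R.card = 4 := by
        rw [hR]
        rw [Finset.card_insert_of_notMem (by
          simp only [Finset.mem_insert, Finset.mem_singleton]
          push_neg
          exact ⟨hvu₁, Ne.symm hu'v, hvw₁⟩)]
        rw [Finset.card_insert_of_notMem (by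
          simp only [Finset.mem_insert, Finset.mem_singleton]
          push_neg
          exact ⟨Ne.symm hu'u₁, hu₁w₁⟩)]
        rw [Finset.card_insert_of_notMem (by
          simp only [Finset.mem_singleton]
          exact hu'w₁)]
        rfl
      have hscard : s.card = n - 4 := by
        rw [hsdef, Finset.card_sdiff_of_subset (Finset.subset_univ _), Finset.card_univ, hRcard]
      omega
    case pos =>
      have hu'nb : ∀ x, Gᶜ.Adj u' x ↔ x = u₁ ∨ x = w₁ :=
        nb_char (hH2 u') hu₁w₁ hadj_uu'.symm hB
      have hw₁nb : ∀ x, Gᶜ.Adj w₁ x ↔ x = v ∨ x = u' :=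
        nb_char (hH2 w₁) (Ne.symm hu'v) hadj_vw.symm hB.symm
      set R4 : Finset V := {v, u₁, u', w₁} with hR4
      have hmemR4 : ∀ x, x ∈ R4 ↔ x = v ∨ x = u₁ ∨ x = u' ∨ x = w₁ := by
        intro x; simp [hR4]
      have hR4card : R4.card = 4 := by
        rw [hR4]
        rw [Finset.card_insert_of_notMem (by
          simp only [Finset.mem_insert, Finset.mem_singleton]
          push_neg
          exact ⟨hvu₁, Ne.symm hu'v, hvw₁⟩)]
        rw [Finset.card_insert_of_notMem (by
          simp only [Finset.mem_insert, Finset.mem_singleton]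
          push_neg
          exact ⟨Ne.symm hu'u₁, hu₁w₁⟩)]
        rw [Finset.card_insert_of_notMem (by
          simp only [Finset.mem_singleton]
          exact hu'w₁)]
        rfl
      set T : Finset V := Finset.univ \ R4 with hT
      have hTcard : T.card = n - 4 := by
        rw [hT, Finset.card_sdiff_of_subset (Finset.subset_univ _), Finset.card_univ, hR4card]
      have hT2 : 2 ≤ T.card := by
        by_contra hT1
        push_neg at hT1
        have hTpos : 1 ≤ T.card := by omega
        have hTeq : T.card = 1 := by omega
        obtain ⟨y, hy⟩ := Finset.card_eq_one.mp hTeq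
        have hymem : y ∈ T := hy ▸ Finset.mem_singleton_self y
        have hyR4 : ¬(y = v ∨ y = u₁ ∨ y = u' ∨ y = w₁) := by
          have := (Finset.mem_sdiff.mp hymem).2
          rw [hmemR4] at this
          exact this
        have hydeg : 0 < Gᶜ.degree y := by rw [hH2]; omega
        obtain ⟨x, hx⟩ := (SimpleGraph.degree_pos_iff_exists_adj Gᶜ y).mp hydeg
        have hxy : x ≠ y := hx.ne'
        have hxR4 : x ∈ R4 := by
          by_contra hxR4
          have hxT : x ∈ T := by
            rw [hT, Finset.mem_sdiff]
            exact ⟨Finset.mem_univ x, hxR4⟩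
          rw [hy, Finset.mem_singleton] at hxT
          exact hxy hxT
        rw [hmemR4] at hxR4
        apply hyR4
        rcases hxR4 with rfl | rfl | rfl | rfl
        · rcases (hvnb y).mp hx.symm with rfl | rfl
          · exact Or.inr (Or.inl rfl)
          · exact Or.inr (Or.inr (Or.inr rfl))
        · rcases (hu₁nb y).mp hx.symm with rfl | rfl
          · exact Or.inl rfl
          · exact Or.inr (Or.inr (Or.inl rfl))
        · rcases (hu'nb y).mp hx.symm with rfl | rfl
          · exact Or.inr (Or.inl rfl)
          · exact Or.inr (Or.inr (Or.inr rfl))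
        · rcases (hw₁nb y).mp hx.symm with rfl | rfl
          · exact Or.inl rfl
          · exact Or.inr (Or.inr (Or.inl rfl))
      obtain ⟨z, hzT, z', hz'T, hzz'⟩ := Finset.one_lt_card.mp (by omega : 1 < T.card)
      have hzR4 : ¬(z = v ∨ z = u₁ ∨ z = u' ∨ z = w₁) := by
        have := (Finset.mem_sdiff.mp hzT).2
        rw [hmemR4] at this
        exact this
      have hz'R4 : ¬(z' = v ∨ z' = u₁ ∨ z' = u' ∨ z' = w₁) := by
        have := (Finset.mem_sdiff.mp hz'T).2
        rw [hmemR4] at this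
        exact this
      push_neg at hzR4 hz'R4
      obtain ⟨hzv, hzu₁, hzu', hzw₁⟩ := hzR4
      obtain ⟨hz'v, hz'u₁, hz'u', hz'w₁⟩ := hz'R4
      set R6 : Finset V := insert z (insert z' R4) with hR6
      have hR6card : R6.card = 6 := by
        rw [hR6]
        rw [Finset.card_insert_of_notMem (by
          simp only [Finset.mem_insert]
          push_neg
          refine ⟨hzz', ?_⟩
          rw [hmemR4]
          tauto)]
        rw [Finset.card_insert_of_notMem (by
          rw [hmemR4]
          tauto)]
        omega
      set s : Finset V := Finset.univ \ R6 with hsdef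
      have hsmem : ∀ x, x ∈ s ↔
          ¬(x = z ∨ x = z' ∨ x = v ∨ x = u₁ ∨ x = u' ∨ x = w₁) := by
        intro x
        rw [hsdef, Finset.mem_sdiff, hR6]
        simp only [Finset.mem_univ, true_and, Finset.mem_insert, Finset.mem_singleton]
        rw [hmemR4]
      have hsnuniv : s ≠ Finset.univ := by
        intro h
        have : v ∈ s := h ▸ Finset.mem_univ v
        rw [hsmem] at this
        exact this (Or.inr (Or.inr (Or.inl rfl)))
      have hohs := hmin s hsnuniv
      haveI : Fintype ↥((s : Set V)) := FinsetCoe.fintype s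
      have hHas : (G.induce (s : Set V)).HasOddKMinor ((s.card + 1) / 2) :=
        hasOddKMinor_of_le_oh hohs
      set cN : V → Bool := fun x => if x = v ∨ x = u₁ ∨ x = w₁ then true else false with hcN
      have hcNv : cN v = true := by rw [hcN]; simp
      have hcNu₁ : cN u₁ = true := by rw [hcN]; simp
      have hcNw₁ : cN w₁ = true := by rw [hcN]; simp
      have hcNu' : cN u' = false := by rw [hcN]; simp [hu'v, hu'u₁, hu'w₁]
      have hcNz : cN z = false := by rw [hcN]; simp [hzv, hzu₁, hzw₁]
      have hcNz' : cN z' = false := by rw [hcN]; simp [hz'v, hz'u₁, hz'w₁]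
      have hGu₁z : G.Adj u₁ z := by
        refine adj_of_not_compl_adj (Ne.symm hzu₁) ?_
        intro hadj
        rcases (hu₁nb z).mp hadj with rfl | rfl
        · exact hzv rfl
        · exact hzu' rfl
      have hGw₁z' : G.Adj w₁ z' := by
        refine adj_of_not_compl_adj (Ne.symm hz'w₁) ?_
        intro hadj
        rcases (hw₁nb z').mp hadj with rfl | rfl
        · exact hz'v rfl
        · exact hz'u' rfl
      have hGu'z : G.Adj u' z := by
        refine adj_of_not_compl_adj (Ne.symm hzu') ?_
        intro hadj
        rcases (hu'nb z).mp hadj with rfl | rfl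
        · exact hzu₁ rfl
        · exact hzw₁ rfl
      have hGu'z' : G.Adj u' z' := by
        refine adj_of_not_compl_adj (Ne.symm hz'u') ?_
        intro hadj
        rcases (hu'nb z').mp hadj with rfl | rfl
        · exact hz'u₁ rfl
        · exact hz'w₁ rfl
      have hsmem' : ∀ x, x ∈ ((s : Set V)) ↔
          ¬(x = z ∨ x = z' ∨ x = v ∨ x = u₁ ∨ x = u' ∨ x = w₁) :=
        fun x => by rw [Finset.mem_coe]; exact hsmem x
      have hext := main_ext G (s : Set V) hHas
        ![({v, u'} : Set V), ({u₁, z} : Set V), ({w₁, z'} : Set V)] ![v, u₁, w₁] cN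
        (by intro i x hx hxs
            have hns := (hsmem' x).mp hxs
            apply hns
            fin_cases i
            · rcases (hx : x ∈ ({v, u'} : Set V)) with rfl | rfl
              · exact Or.inr (Or.inr (Or.inl rfl))
              · exact Or.inr (Or.inr (Or.inr (Or.inr (Or.inl rfl))))
            · rcases (hx : x ∈ ({u₁, z} : Set V)) with rfl | rfl
              · exact Or.inr (Or.inr (Or.inr (Or.inl rfl)))
              · exact Or.inl rfl
            · rcases (hx : x ∈ ({w₁, z'} : Set V)) with rfl | rfl
              · exact Or.inr (Or.inr (Or.inr (Or.inr (Or.inr rfl))))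
              · exact Or.inr (Or.inl rfl))
        (by intro i
            fin_cases i
            · exact (Or.inl rfl : v ∈ ({v, u'} : Set V))
            · exact (Or.inl rfl : u₁ ∈ ({u₁, z} : Set V))
            · exact (Or.inl rfl : w₁ ∈ ({w₁, z'} : Set V)))
        (by intro i j hij
            have hd01 : Disjoint ({v, u'} : Set V) ({u₁, z} : Set V) := by
              rw [Set.disjoint_left]
              rintro x (rfl | rfl) (rfl | rfl)
              · exact hvu₁ rfl
              · exact hzv rfl
              · exact hu'u₁ rfl
              · exact hzu' rfl
            have hd02 : Disjoint ({v, u'} : Set V) ({w₁, z'} : Set V) := by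
              rw [Set.disjoint_left]
              rintro x (rfl | rfl) (rfl | rfl)
              · exact hvw₁ rfl
              · exact hz'v rfl
              · exact hu'w₁ rfl
              · exact hz'u' rfl
            have hd12 : Disjoint ({u₁, z} : Set V) ({w₁, z'} : Set V) := by
              rw [Set.disjoint_left]
              rintro x (rfl | rfl) (rfl | rfl)
              · exact hu₁w₁ rfl
              · exact hz'u₁ rfl
              · exact hzw₁ rfl
              · exact hzz' rfl
            fin_cases i <;> fin_cases j
            · exact absurd rfl hij
            · exact hd01
            · exact hd02
            · exact hd01.symm
            · exact absurd rfl hij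
            · exact hd12
            · exact hd02.symm
            · exact hd12.symm
            · exact absurd rfl hij)
        (by intro i
            fin_cases i
            · exact hcNv
            · exact hcNu₁
            · exact hcNw₁)
        (by intro i y hy
            have hns := (hsmem' y).mp hy
            push_neg at hns
            obtain ⟨hy1, hy2, hy3, hy4, hy5, hy6⟩ := hns
            fin_cases i
            · refine adj_of_not_compl_adj (Ne.symm hy3) ?_
              intro hadj
              rcases (hvnb y).mp hadj with rfl | rfl
              · exact hy4 rfl
              · exact hy6 rfl
            · refine adj_of_not_compl_adj (Ne.symm hy4) ?_
              intro hadj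
              rcases (hu₁nb y).mp hadj with rfl | rfl
              · exact hy3 rfl
              · exact hy5 rfl
            · refine adj_of_not_compl_adj (Ne.symm hy6) ?_
              intro hadj
              rcases (hw₁nb y).mp hadj with rfl | rfl
              · exact hy3 rfl
              · exact hy5 rfl)
        (by intro i
            fin_cases i
            · refine connected_induce_pair ⟨hGvu', ?_⟩
              rw [hcNv, hcNu']
              simp
            · refine connected_induce_pair ⟨hGu₁z, ?_⟩
              rw [hcNu₁, hcNz]
              simp
            · refine connected_induce_pair ⟨hGw₁z', ?_⟩
              rw [hcNw₁, hcNz']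
              simp)
        (by intro i j hij
            fin_cases i <;> fin_cases j
            · exact absurd rfl hij
            · refine ⟨u', ?_, z, ?_, hGu'z, by rw [hcNu', hcNz]⟩
              · show u' ∈ ({v, u'} : Set V)
                exact Or.inr rfl
              · show z ∈ ({u₁, z} : Set V)
                exact Or.inr rfl
            · refine ⟨u', ?_, z', ?_, hGu'z', by rw [hcNu', hcNz']⟩
              · show u' ∈ ({v, u'} : Set V)
                exact Or.inr rfl
              · show z' ∈ ({w₁, z'} : Set V)
                exact Or.inr rfl
            · refine ⟨z, ?_, u', ?_, hGu'z.symm, by rw [hcNu', hcNz]⟩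
              · show z ∈ ({u₁, z} : Set V)
                exact Or.inr rfl
              · show u' ∈ ({v, u'} : Set V)
                exact Or.inr rfl
            · exact absurd rfl hij
            · refine ⟨u₁, ?_, w₁, ?_, hGuw, by rw [hcNu₁, hcNw₁]⟩
              · show u₁ ∈ ({u₁, z} : Set V)
                exact Or.inl rfl
              · show w₁ ∈ ({w₁, z'} : Set V)
                exact Or.inl rfl
            · refine ⟨z', ?_, u', ?_, hGu'z'.symm, by rw [hcNu', hcNz']⟩
              · show z' ∈ ({w₁, z'} : Set V)
                exact Or.inr rfl
              · show u' ∈ ({v, u'} : Set V)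
                exact Or.inr rfl
            · refine ⟨w₁, ?_, u₁, ?_, hGuw.symm, by rw [hcNu₁, hcNw₁]⟩
              · show w₁ ∈ ({w₁, z'} : Set V)
                exact Or.inl rfl
              · show u₁ ∈ ({u₁, z} : Set V)
                exact Or.inl rfl
            · exact absurd rfl hij)
      have hfin := le_oh_of_hasOddKMinor hext
      have hscard : s.card = n - 6 := by
        rw [hsdef, Finset.card_sdiff_of_subset (Finset.subset_univ _), Finset.card_univ, hR6card]
      omega
  obtain ⟨v, hv⟩ := hdelta
  have hminle := G.minDegree_le_degree v
  have hmaxle := SimpleGraph.maxDegree_le_of_forall_degree_le (G := G) (n - 3) hdeg3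
  constructor
  · omega
  · omega
end

section
/- Let G be a graph on n vertices with independence number α(G) ≤ 2 such that oh(G) < ⌈n/2⌉, and such that every proper induced subgraph G′ of G satisfies oh(G′) ≥ ⌈|G′|/2⌉. Then for every vertex v of G, the set V(G) \ N[v] is a clique, and 2 ≤ n − 1 − d(v) ≤ ω(G) ≤ ⌈n/2⌉ − 1, where d(v) is the degree of v. -/
open SimpleGraph

namespace SimpleGraph
variable {V : Type*}

lemma hasOddKMinor_zero (G : SimpleGraph V) : G.HasOddKMinor 0 :=
  ⟨fun _ => true, fun i => i.elim0, fun i => i.elim0, fun i => i.elim0,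
    fun i => i.elim0, fun i => i.elim0⟩

lemma HasOddKMinor.le_card_s12 [Fintype V] {G : SimpleGraph V} {t : ℕ}
    (h : G.HasOddKMinor t) : t ≤ Fintype.card V := by
  obtain ⟨c, B, hne, hdisj, -, -⟩ := h
  choose f hf using hne
  have hinj : Function.Injective f := by
    intro i j hij
    by_contra hne'
    exact Set.disjoint_left.1 (hdisj hne') (hf i) (hij ▸ hf j)
  simpa using Fintype.card_le_of_injective f hinj

lemma HasOddKMinor.le_oh [Fintype V] {G : SimpleGraph V} {t : ℕ}
    (h : G.HasOddKMinor t) : t ≤ G.oh :=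
  le_csSup ⟨Fintype.card V, fun _ hm => hm.le_card_s12⟩ h

lemma hasOddKMinor_oh [Fintype V] (G : SimpleGraph V) : G.HasOddKMinor G.oh := by
  have h1 : {t | G.HasOddKMinor t}.Nonempty := ⟨0, G.hasOddKMinor_zero⟩
  have h2 : BddAbove {t | G.HasOddKMinor t} :=
    ⟨Fintype.card V, fun _ hm => HasOddKMinor.le_card_s12 hm⟩
  exact Nat.sSup_mem h1 h2

lemma connected_induce_singleton (H : SimpleGraph V) (x : V) :
    (H.induce {x}).Connected := by
  rw [connected_iff]
  refine ⟨fun a b => ?_, ⟨⟨x, rfl⟩⟩⟩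
  have : a = b := Subtype.ext (a.2.trans b.2.symm)
  exact this ▸ Reachable.refl a

lemma IsClique.hasOddKMinor {G : SimpleGraph V} {s : Finset V} (hs : G.IsClique ↑s) :
    G.HasOddKMinor s.card := by
  classical
  refine ⟨fun _ => true, fun i => {(s.equivFin.symm i : V)}, fun i => ⟨_, rfl⟩, ?_, ?_, ?_⟩
  · intro i j hij
    have : (s.equivFin.symm i : V) ≠ (s.equivFin.symm j : V) := by
      simp only [ne_eq, Subtype.coe_inj, EmbeddingLike.apply_eq_iff_eq]
      exact hij
    exact Set.disjoint_singleton.2 this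
  · intro i
    exact connected_induce_singleton _ _
  · intro i j hij
    have hne : (s.equivFin.symm i : V) ≠ (s.equivFin.symm j : V) := by
      simp only [ne_eq, Subtype.coe_inj, EmbeddingLike.apply_eq_iff_eq]
      exact hij
    exact ⟨_, rfl, _, rfl, hs (s.equivFin.symm i).2 (s.equivFin.symm j).2 hne, rfl⟩

end SimpleGraph

namespace SimpleGraph
variable {V : Type*}

lemma oh_succ_le_of_adj_all [Fintype V] {G : SimpleGraph V} {v : V} {s : Set V}
    (hv : v ∉ s) (hadj : ∀ x ∈ s, G.Adj v x) :
    (G.induce s).oh + 1 ≤ G.oh := by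
  classical
  haveI : Fintype ↥s := Fintype.ofFinite ↥s
  set t := (G.induce s).oh with ht
  obtain ⟨c, B, hne, hdisj, hconn, hjoin⟩ : (G.induce s).HasOddKMinor t :=
    (G.induce s).hasOddKMinor_oh
  -- find a color present in every branch set
  have hb : ∃ b : Bool, ∀ i, ∃ x ∈ B i, c x = b := by
    by_cases h : ∃ i₀, ∀ x ∈ B i₀, c x = false
    · obtain ⟨i₀, h₀⟩ := h
      refine ⟨false, fun i => ?_⟩
      by_cases hi : i = i₀
      · obtain ⟨x, hx⟩ := hne i₀
        exact hi ▸ ⟨x, hx, h₀ x hx⟩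
      · obtain ⟨u, hu, w, hw, -, hcol⟩ := hjoin i₀ i (Ne.symm hi)
        exact ⟨w, hw, by rw [← hcol]; exact h₀ u hu⟩
    · push_neg at h
      refine ⟨true, fun i => ?_⟩
      obtain ⟨x, hx, hxc⟩ := h i
      exact ⟨x, hx, by simpa using hxc⟩
  obtain ⟨b, hb⟩ := hb
  -- the extended coloring
  set c' : V → Bool := fun x => if h : x ∈ s then c ⟨x, h⟩ else b with hc'
  have key : ∀ x : ↥s, c' (x : V) = c x := by
    intro x
    simp only [hc', dif_pos x.2]
  have hcv : c' v = b := by simp only [hc', dif_neg hv]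
  -- the extended branch sets
  set B' : Fin (t + 1) → Set V :=
    Fin.lastCases {v} (fun i => Subtype.val '' B i) with hB'
  have hBcast : ∀ i : Fin t, B' i.castSucc = Subtype.val '' B i := by
    intro i; simp [hB']
  have hBlast : B' (Fin.last t) = {v} := by simp [hB']
  have hims : ∀ i : Fin t, Subtype.val '' B i ⊆ s := by
    rintro i x ⟨y, -, rfl⟩; exact y.2
  have hminor : G.HasOddKMinor (t + 1) := by
    refine ⟨c', B', ?_, ?_, ?_, ?_⟩
    · intro i
      induction i using Fin.lastCases with
      | last => exact hBlast ▸ ⟨v, rfl⟩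
      | cast i =>
        obtain ⟨x, hx⟩ := hne i
        exact (hBcast i) ▸ ⟨x, Set.mem_image_of_mem _ hx⟩
    · intro i j hij
      induction i using Fin.lastCases with
      | last =>
        induction j using Fin.lastCases with
        | last => exact absurd rfl hij
        | cast j =>
          rw [hBlast, hBcast]
          exact Set.disjoint_singleton_left.2 fun hvj => hv (hims j hvj)
      | cast i =>
        induction j using Fin.lastCases with
        | last =>
          rw [hBlast, hBcast]
          exact (Set.disjoint_singleton_left.2 fun hvj => hv (hims i hvj)).symm
        | cast j =>
          rw [hBcast, hBcast]
          have hij' : i ≠ j := fun h => hij (by rw [h])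
          exact Set.disjoint_image_of_injective Subtype.val_injective (hdisj hij')
    · intro i
      induction i using Fin.lastCases with
      | last => exact hBlast ▸ connected_induce_singleton _ v
      | cast i =>
        rw [hBcast]
        have e : ((G.induce s).bichromaticSubgraph c).induce (B i) ≃g
            (G.bichromaticSubgraph c').induce (Subtype.val '' B i) := by
          refine ⟨Equiv.Set.image Subtype.val (B i) Subtype.val_injective, ?_⟩
          rintro ⟨⟨a, ha⟩, haB⟩ ⟨⟨b', hb'⟩, hbB⟩
          show (G.bichromaticSubgraph c').Adj a b' ↔
            ((G.induce s).bichromaticSubgraph c).Adj ⟨a, ha⟩ ⟨b', hb'⟩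
          show (G.Adj a b' ∧ c' a ≠ c' b') ↔
            ((G.induce s).Adj ⟨a, ha⟩ ⟨b', hb'⟩ ∧ c ⟨a, ha⟩ ≠ c ⟨b', hb'⟩)
          rw [key ⟨a, ha⟩, key ⟨b', hb'⟩]
          rfl
        exact e.connected_iff.1 (hconn i)
    · intro i j hij
      induction i using Fin.lastCases with
      | last =>
        induction j using Fin.lastCases with
        | last => exact absurd rfl hij
        | cast j =>
          obtain ⟨x, hx, hxc⟩ := hb j
          refine ⟨v, hBlast ▸ rfl, x, (hBcast j) ▸ Set.mem_image_of_mem _ hx,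
            hadj x x.2, ?_⟩
          rw [hcv, key x, hxc]
      | cast i =>
        induction j using Fin.lastCases with
        | last =>
          obtain ⟨x, hx, hxc⟩ := hb i
          refine ⟨x, (hBcast i) ▸ Set.mem_image_of_mem _ hx, v, hBlast ▸ rfl,
            (hadj x x.2).symm, ?_⟩
          rw [hcv, key x, hxc]
        | cast j =>
          have hij' : i ≠ j := fun h => hij (by rw [h])
          obtain ⟨u, hu, w, hw, huw, hcol⟩ := hjoin i j hij'
          refine ⟨u, (hBcast i) ▸ Set.mem_image_of_mem _ hu,
            w, (hBcast j) ▸ Set.mem_image_of_mem _ hw, huw, ?_⟩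
          rw [key u, key w, hcol]
  exact hminor.le_oh

end SimpleGraph

theorem statement12 {V : Type*} [Fintype V] (G : SimpleGraph V) [DecidableRel G.Adj]
    (hα : G.indepNum' ≤ 2) (hoh : G.oh < (Fintype.card V + 1) / 2)
    (hmin : ∀ s : Finset V, s ≠ Finset.univ →
      (s.card + 1) / 2 ≤ (G.induce (s : Set V)).oh) :
    ∀ v : V, G.IsClique ((insert v (G.neighborSet v))ᶜ) ∧
      2 ≤ (Fintype.card V : ℤ) - 1 - G.degree v ∧
      (Fintype.card V : ℤ) - 1 - G.degree v ≤ G.cliqueNum ∧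
      (G.cliqueNum : ℤ) ≤ (((Fintype.card V + 1) / 2 : ℕ) : ℤ) - 1 := by
  classical
  intro v
  have hclique : G.IsClique ((insert v (G.neighborSet v))ᶜ) := by
    intro a ha b hb hab
    by_contra hnadj
    have ha' : a ≠ v ∧ ¬ G.Adj v a := by
      simpa [Set.mem_compl_iff, not_or] using ha
    have hb' : b ≠ v ∧ ¬ G.Adj v b := by
      simpa [Set.mem_compl_iff, not_or] using hb
    have h3 : Gᶜ.IsNClique 3 {v, a, b} := by
      rw [is3Clique_triple_iff]
      refine ⟨⟨ha'.1.symm, ha'.2⟩, ⟨hb'.1.symm, hb'.2⟩, ⟨hab, hnadj⟩⟩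
    have : 3 ≤ Gᶜ.cliqueNum := by
      have := h3.isClique.card_le_cliqueNum
      rwa [h3.card_eq] at this
    exact absurd (this.trans hα) (by norm_num)
  have hvnm : v ∉ G.neighborFinset v := by simp
  have hd1 : G.degree v + 1 ≤ Fintype.card V := by
    have : (insert v (G.neighborFinset v)).card ≤ Fintype.card V :=
      Finset.card_le_univ _
    rwa [Finset.card_insert_of_notMem hvnm, card_neighborFinset_eq_degree] at this
  have h2 : G.degree v + 3 ≤ Fintype.card V := by
    by_contra h
    have hvns : v ∉ (↑(G.neighborFinset v) : Set V) := by simpa using hvnm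
    have hadj : ∀ x ∈ (↑(G.neighborFinset v) : Set V), G.Adj v x := by
      intro x hx
      simpa [mem_neighborFinset] using hx
    have hstep := oh_succ_le_of_adj_all hvns hadj
    have hne : G.neighborFinset v ≠ Finset.univ := by
      intro hcontra
      exact hvnm (hcontra ▸ Finset.mem_univ v)
    have hmin' := hmin (G.neighborFinset v) hne
    rw [card_neighborFinset_eq_degree] at hmin'
    omega
  have hωge : Fintype.card V - (G.degree v + 1) ≤ G.cliqueNum := by
    have hT : G.IsClique (↑(((insert v (G.neighborSet v))ᶜ : Set V).toFinset)) := by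
      rw [Set.coe_toFinset]; exact hclique
    have hcard := hT.card_le_cliqueNum
    have : ((insert v (G.neighborSet v))ᶜ : Set V).toFinset.card =
        Fintype.card V - (G.degree v + 1) := by
      rw [Set.toFinset_compl, Finset.card_compl, Set.toFinset_insert, ← neighborFinset_def,
        Finset.card_insert_of_notMem hvnm, card_neighborFinset_eq_degree]
    omega
  have hωoh : G.cliqueNum ≤ G.oh := by
    obtain ⟨s, hs⟩ := G.exists_isNClique_cliqueNum
    have := (hs.isClique.hasOddKMinor).le_oh
    rwa [hs.card_eq] at this
  refine ⟨hclique, by omega, by omega, by omega⟩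
end

section
/- Let G be a graph on n vertices with independence number α(G) ≤ 2 such that oh(G) < ⌈n/2⌉, and such that every proper induced subgraph G′ of G satisfies oh(G′) ≥ ⌈|G′|/2⌉. Then for every vertex v of G, the neighborhood N(v) is not a clique, α(G[N(v)]) = 2, and the induced subgraph G[N(v)] is connected. -/
open SimpleGraph

namespace OddAux

variable {V : Type*}

lemma connected_induce_of_hub (H : SimpleGraph V) (S : Set V) (h : V) (hh : h ∈ S)
    (hadj : ∀ x ∈ S, x = h ∨ H.Adj h x) : (H.induce S).Connected := by
  have hreach : ∀ x : S, (H.induce S).Reachable x ⟨h, hh⟩ := by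
    rintro ⟨x, hx⟩
    rcases hadj x hx with rfl | ha
    · exact Reachable.refl _
    · exact SimpleGraph.Adj.reachable (show H.Adj x h from ha.symm)
  haveI : Nonempty S := ⟨⟨h, hh⟩⟩
  exact ⟨fun a b => (hreach a).trans (hreach b).symm⟩

lemma hasOddKMinor_of_family {G : SimpleGraph V} {ι : Type*} [Fintype ι]
    {c : V → Bool} {B : ι → Set V} {t : ℕ}
    (hne : ∀ i, (B i).Nonempty)
    (hdisj : ∀ i j, i ≠ j → Disjoint (B i) (B j))
    (hconn : ∀ i, ((G.bichromaticSubgraph c).induce (B i)).Connected)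
    (hjoin : ∀ i j, i ≠ j → ∃ u ∈ B i, ∃ w ∈ B j, G.Adj u w ∧ c u = c w)
    (ht : t ≤ Fintype.card ι) : G.HasOddKMinor t := by
  obtain ⟨f⟩ := Function.Embedding.nonempty_of_card_le
    (show Fintype.card (Fin t) ≤ Fintype.card ι by simpa using ht)
  exact ⟨c, fun i => B (f i), fun i => hne _,
    fun i j hij => hdisj _ _ fun h => hij (f.injective h),
    fun i => hconn _,
    fun i j hij => hjoin _ _ fun h => hij (f.injective h)⟩

lemma hasOddKMinor_of_isClique {G : SimpleGraph V} (S : Finset V) (hS : G.IsClique ↑S)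
    {t : ℕ} (ht : t ≤ S.card) : G.HasOddKMinor t := by
  classical
  refine hasOddKMinor_of_family (ι := ↥S) (c := fun _ => true) (B := fun i => {(i : V)})
    (fun i => ⟨i, rfl⟩) ?_ ?_ ?_ (by simpa [Fintype.card_coe] using ht)
  · intro i j hij
    simp only [Set.disjoint_singleton_left, Set.mem_singleton_iff]
    exact fun h => hij (Subtype.ext h)
  · intro i
    exact connected_induce_of_hub _ _ (i : V) rfl (fun x hx => Or.inl hx)
  · intro i j hij
    exact ⟨i, rfl, j, rfl, hS (Finset.mem_coe.mpr i.2) (Finset.mem_coe.mpr j.2)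
      (fun h => hij (Subtype.ext h)), rfl⟩

lemma not_hasOddKMinor_of_oh_lt [Fintype V] {G : SimpleGraph V} {t : ℕ} (h : G.oh < t) :
    ¬ G.HasOddKMinor t := by
  intro hm
  have hb : BddAbove {n | G.HasOddKMinor n} := by
    refine ⟨Fintype.card V, ?_⟩
    rintro n ⟨c, B, hne, hdisj, -, -⟩
    classical
    choose f hf using hne
    have hinj : Function.Injective f := by
      intro i j hij
      by_contra hne'
      exact Set.disjoint_left.1 (hdisj hne') (hf i) (hij ▸ hf j)
    calc n = Fintype.card (Fin n) := (Fintype.card_fin n).symm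
      _ ≤ Fintype.card V := Fintype.card_le_of_injective f hinj
  exact absurd (le_csSup hb hm) (not_le.2 h)

end OddAux

section Construction
open Finset
variable {V : Type*}

lemma construction [Fintype V] {G : SimpleGraph V} (v : V)
    (A B MA MB : Finset V)
    (hvA : v ∉ A) (hvB : v ∉ B) (hvMA : v ∉ MA) (hvMB : v ∉ MB)
    (hdAB : Disjoint A B) (hdAMA : Disjoint A MA) (hdAMB : Disjoint A MB)
    (hdBMA : Disjoint B MA) (hdBMB : Disjoint B MB) (hdMAMB : Disjoint MA MB)
    (hadjvA : ∀ a ∈ A, G.Adj v a) (hadjvB : ∀ b ∈ B, G.Adj v b)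
    (hAclq : ∀ a ∈ A, ∀ a' ∈ A, a ≠ a' → G.Adj a a')
    (hMclq : ∀ m, (m ∈ MA ∨ m ∈ MB) → ∀ m', (m' ∈ MA ∨ m' ∈ MB) → m ≠ m' → G.Adj m m')
    (hMAA : ∀ m ∈ MA, ∀ a ∈ A, G.Adj m a)
    (hMBB : ∀ m ∈ MB, ∀ b ∈ B, G.Adj m b)
    (hBne : B.Nonempty)
    (hcard : MA.card ≤ MB.card)
    {t : ℕ} (ht : t ≤ 1 + MA.card + A.card) :
    G.HasOddKMinor t := by
  classical
  obtain ⟨b0, hb0⟩ := hBne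
  obtain ⟨φ⟩ : Nonempty (↥MA ↪ ↥MB) :=
    Function.Embedding.nonempty_of_card_le (by simpa [Fintype.card_coe] using hcard)
  set c : V → Bool := fun u => decide (u = v ∨ u ∈ A ∨ u ∈ MA) with hc
  have ctrue : ∀ u, u = v ∨ u ∈ A ∨ u ∈ MA → c u = true := by
    intro u hu; simp [hc, hu]
  have cfalse : ∀ u, u ∈ B ∪ MB → c u = false := by
    intro u hu
    rcases Finset.mem_union.1 hu with hu' | hu'
    · have h1 : u ≠ v := fun h => hvB (h ▸ hu')
      have h2 : u ∉ A := fun h => (Finset.disjoint_left.1 hdAB h) hu'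
      have h3 : u ∉ MA := fun h => (Finset.disjoint_left.1 hdBMA hu') h
      simp [hc, h1, h2, h3]
    · have h1 : u ≠ v := fun h => hvMB (h ▸ hu')
      have h2 : u ∉ A := fun h => (Finset.disjoint_left.1 hdAMB h) hu'
      have h3 : u ∉ MA := fun h => (Finset.disjoint_left.1 hdMAMB h) hu'
      simp [hc, h1, h2, h3]
  -- the branch sets
  set Bs : Unit ⊕ (↥MA ⊕ ↥A) → Set V := fun i =>
    match i with
    | Sum.inl _ => insert v (↑B : Set V)
    | Sum.inr (Sum.inl m) => {(m : V), ((φ m : ↥MB) : V)}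
    | Sum.inr (Sum.inr a) => {(a : V)} with hBs
  -- membership helpers
  have hmemT : ∀ u, u ∈ Bs (Sum.inl ()) ↔ (u = v ∨ u ∈ B) := by
    intro u; simp [hBs]
  have hmemP : ∀ (m : ↥MA) (u), u ∈ Bs (Sum.inr (Sum.inl m)) ↔ (u = (m : V) ∨ u = ((φ m : ↥MB) : V)) := by
    intro m u; simp [hBs]
  have hmemS : ∀ (a : ↥A) (u), u ∈ Bs (Sum.inr (Sum.inr a)) ↔ u = (a : V) := by
    intro a u; simp [hBs]
  have hMAmem : ∀ m : ↥MA, ((m : V) ∈ MA ∨ (m:V) ∈ MB) := fun m => Or.inl m.2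
  have hMBmem : ∀ m : ↥MB, ((m : V) ∈ MA ∨ (m:V) ∈ MB) := fun m => Or.inr m.2
  have hMAMBne : ∀ (m : ↥MA) (m' : ↥MB), (m : V) ≠ (m' : V) :=
    fun m m' h => (Finset.disjoint_left.1 hdMAMB m.2) (h ▸ m'.2)
  refine OddAux.hasOddKMinor_of_family (ι := Unit ⊕ (↥MA ⊕ ↥A)) (c := c) (B := Bs)
    ?_ ?_ ?_ ?_ ?_
  · rintro (i | m | a)
    · exact ⟨v, by rw [hmemT]; exact Or.inl rfl⟩
    · exact ⟨(m : V), by rw [hmemP]; exact Or.inl rfl⟩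
    · exact ⟨(a : V), by rw [hmemS]⟩
  · -- pairwise disjoint
    rintro (⟨⟩ | m | a) (⟨⟩ | m' | a') hij <;>
      rw [Set.disjoint_left] <;> intro u hu hu'
    · exact hij rfl
    · rw [hmemT] at hu; rw [hmemP] at hu'
      rcases hu' with rfl | rfl
      · rcases hu with h | h
        · exact hvMA (h ▸ m'.2)
        · exact (Finset.disjoint_left.1 hdBMA h) m'.2
      · rcases hu with h | h
        · exact hvMB (h ▸ (φ m').2)
        · exact (Finset.disjoint_left.1 hdBMB h) (φ m').2
    · rw [hmemT] at hu; rw [hmemS] at hu'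
      subst hu'
      rcases hu with h | h
      · exact hvA (h ▸ a'.2)
      · exact (Finset.disjoint_left.1 hdAB a'.2) h
    · rw [hmemP] at hu; rw [hmemT] at hu'
      rcases hu with rfl | rfl
      · rcases hu' with h | h
        · exact hvMA (h ▸ m.2)
        · exact (Finset.disjoint_left.1 hdBMA h) m.2
      · rcases hu' with h | h
        · exact hvMB (h ▸ (φ m).2)
        · exact (Finset.disjoint_left.1 hdBMB h) (φ m).2
    · rw [hmemP] at hu hu'
      have hmm : m ≠ m' := fun h => hij (by rw [h])
      rcases hu with rfl | rfl <;> rcases hu' with h | h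
      · exact hmm (Subtype.ext (by exact h))
      · exact hMAMBne m (φ m') h
      · exact hMAMBne m' (φ m) h.symm
      · exact hmm (φ.injective (Subtype.ext (by exact h)))
    · rw [hmemP] at hu; rw [hmemS] at hu'
      subst hu'
      rcases hu with h | h
      · exact (Finset.disjoint_left.1 hdAMA a'.2) (h ▸ m.2)
      · exact (Finset.disjoint_left.1 hdAMB a'.2) (h ▸ (φ m).2)
    · rw [hmemS] at hu; rw [hmemT] at hu'
      subst hu
      rcases hu' with h | h
      · exact hvA (h ▸ a.2)
      · exact (Finset.disjoint_left.1 hdAB a.2) h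
    · rw [hmemS] at hu; rw [hmemP] at hu'
      subst hu
      rcases hu' with h | h
      · exact (Finset.disjoint_left.1 hdAMA a.2) (h ▸ m'.2)
      · exact (Finset.disjoint_left.1 hdAMB a.2) (h ▸ (φ m').2)
    · rw [hmemS] at hu hu'
      subst hu
      exact hij (by rw [show a = a' from Subtype.ext (by exact hu')])
  · -- connectivity
    rintro (⟨⟩ | m | a)
    · refine OddAux.connected_induce_of_hub _ _ v ((hmemT v).2 (Or.inl rfl)) ?_
      intro x hx
      rcases (hmemT x).1 hx with rfl | hxB
      · exact Or.inl rfl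
      · refine Or.inr ⟨(hadjvB x hxB), ?_⟩
        rw [ctrue v (Or.inl rfl), cfalse x (Finset.mem_union_left _ hxB)]
        simp
    · refine OddAux.connected_induce_of_hub _ _ (m : V) ((hmemP m _).2 (Or.inl rfl)) ?_
      intro x hx
      rcases (hmemP m x).1 hx with rfl | rfl
      · exact Or.inl rfl
      · refine Or.inr ⟨hMclq _ (hMAmem m) _ (hMBmem (φ m)) (hMAMBne m (φ m)), ?_⟩
        rw [ctrue _ (Or.inr (Or.inr m.2)), cfalse _ (Finset.mem_union_right _ (φ m).2)]
        simp
    · refine OddAux.connected_induce_of_hub _ _ (a : V) ((hmemS a _).2 rfl) ?_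
      intro x hx
      exact Or.inl ((hmemS a x).1 hx)
  · -- joins
    have swap : ∀ i j, (∃ u ∈ Bs i, ∃ w ∈ Bs j, G.Adj u w ∧ c u = c w) →
        (∃ u ∈ Bs j, ∃ w ∈ Bs i, G.Adj u w ∧ c u = c w) := by
      rintro i j ⟨u, hu, w, hw, h1, h2⟩
      exact ⟨w, hw, u, hu, h1.symm, h2.symm⟩
    have keyTP : ∀ m : ↥MA, ∃ u ∈ Bs (Sum.inl ()), ∃ w ∈ Bs (Sum.inr (Sum.inl m)),
        G.Adj u w ∧ c u = c w := by
      intro m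
      refine ⟨b0, (hmemT b0).2 (Or.inr hb0), ((φ m : ↥MB) : V), (hmemP m _).2 (Or.inr rfl), ?_, ?_⟩
      · exact (hMBB _ (φ m).2 b0 hb0).symm
      · rw [cfalse b0 (Finset.mem_union_left _ hb0), cfalse _ (Finset.mem_union_right _ (φ m).2)]
    have keyTS : ∀ a : ↥A, ∃ u ∈ Bs (Sum.inl ()), ∃ w ∈ Bs (Sum.inr (Sum.inr a)),
        G.Adj u w ∧ c u = c w := by
      intro a
      refine ⟨v, (hmemT v).2 (Or.inl rfl), (a : V), (hmemS a _).2 rfl, hadjvA _ a.2, ?_⟩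
      rw [ctrue v (Or.inl rfl), ctrue _ (Or.inr (Or.inl a.2))]
    have keyPS : ∀ (m : ↥MA) (a : ↥A), ∃ u ∈ Bs (Sum.inr (Sum.inl m)),
        ∃ w ∈ Bs (Sum.inr (Sum.inr a)), G.Adj u w ∧ c u = c w := by
      intro m a
      refine ⟨(m : V), (hmemP m _).2 (Or.inl rfl), (a : V), (hmemS a _).2 rfl,
        hMAA _ m.2 _ a.2, ?_⟩
      rw [ctrue _ (Or.inr (Or.inr m.2)), ctrue _ (Or.inr (Or.inl a.2))]
    rintro (⟨⟩ | m | a) (⟨⟩ | m' | a') hij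
    · exact absurd rfl hij
    · exact keyTP m'
    · exact keyTS a'
    · exact swap (Sum.inl ()) (Sum.inr (Sum.inl m)) (keyTP m)
    · -- P P
      have hmm : (m : V) ≠ (m' : V) := fun h => hij (by rw [show m = m' from Subtype.ext h])
      refine ⟨(m : V), (hmemP m _).2 (Or.inl rfl), (m' : V), (hmemP m' _).2 (Or.inl rfl),
        hMclq _ (hMAmem m) _ (hMAmem m') hmm, ?_⟩
      rw [ctrue _ (Or.inr (Or.inr m.2)), ctrue _ (Or.inr (Or.inr m'.2))]
    · exact keyPS m a'
    · exact swap (Sum.inl ()) (Sum.inr (Sum.inr a)) (keyTS a)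
    · exact swap (Sum.inr (Sum.inl m')) (Sum.inr (Sum.inr a)) (keyPS m' a)
    · -- S S
      have haa : (a : V) ≠ (a' : V) := fun h => hij (by rw [show a = a' from Subtype.ext h])
      refine ⟨(a : V), (hmemS a _).2 rfl, (a' : V), (hmemS a' _).2 rfl,
        hAclq _ a.2 _ a'.2 haa, ?_⟩
      rw [ctrue _ (Or.inr (Or.inl a.2)), ctrue _ (Or.inr (Or.inl a'.2))]
  · -- cardinality
    simp only [Fintype.card_sum, Fintype.card_coe, Fintype.card_unit]
    omega

end Construction

theorem statement17 {V : Type*} [Fintype V] (G : SimpleGraph V)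
    (hα : G.indepNum' ≤ 2) (hoh : G.oh < (Fintype.card V + 1) / 2)
    (hmin : ∀ s : Finset V, s ≠ Finset.univ →
      (s.card + 1) / 2 ≤ (G.induce (s : Set V)).oh) :
    ∀ v : V, ¬ G.IsClique (G.neighborSet v) ∧
      (G.induce (G.neighborSet v)).indepNum' = 2 ∧
      (G.induce (G.neighborSet v)).Connected := by
  classical
  have hα' : Gᶜ.cliqueNum ≤ 2 := hα
  have htri : ∀ x y z : V, x ≠ y → x ≠ z → y ≠ z →
      ¬G.Adj x y → ¬G.Adj x z → ¬G.Adj y z → False := by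
    intro x y z hxy hxz hyz nxy nxz nyz
    have hcl : Gᶜ.IsClique (↑({x, y, z} : Finset V) : Set V) := by
      intro a ha b hb hab
      simp only [Finset.coe_insert, Finset.coe_singleton, Set.mem_insert_iff,
        Set.mem_singleton_iff] at ha hb
      rw [SimpleGraph.compl_adj]
      refine ⟨hab, ?_⟩
      rcases ha with rfl | rfl | rfl <;> rcases hb with rfl | rfl | rfl <;>
        first
          | exact absurd rfl hab
          | assumption
          | (intro h; exact nxy h.symm)
          | (intro h; exact nxz h.symm)
          | (intro h; exact nyz h.symm)
    have hcard : ({x, y, z} : Finset V).card = 3 := by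
      rw [Finset.card_insert_of_notMem (by simp [hxy, hxz]),
        Finset.card_insert_of_notMem (by simp [hyz]), Finset.card_singleton]
    have h3 := SimpleGraph.IsClique.card_le_cliqueNum (tc := hcl)
    rw [hcard] at h3
    omega
  have hNo : ¬ G.HasOddKMinor ((Fintype.card V + 1) / 2) :=
    OddAux.not_hasOddKMinor_of_oh_lt hoh
  intro v
  -- basic partition of the vertex set
  set NF : Finset V := Finset.univ.filter (fun u => G.Adj v u) with hNF
  set MF : Finset V := Finset.univ.filter (fun u => u ≠ v ∧ ¬ G.Adj v u) with hMF
  have hmemNF : ∀ u, u ∈ NF ↔ G.Adj v u := by intro u; simp [hNF]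
  have hmemMF : ∀ u, u ∈ MF ↔ (u ≠ v ∧ ¬ G.Adj v u) := by intro u; simp [hMF]
  have hvNF : v ∉ NF := by simp [hNF]
  have hcards : NF.card + MF.card + 1 = Fintype.card V := by
    have hu : insert v (NF ∪ MF) = Finset.univ := by
      ext u
      by_cases h : u = v
      · simp [h]
      · by_cases h2 : G.Adj v u <;> simp [hNF, hMF, h, h2]
    have hd : Disjoint NF MF := by
      rw [Finset.disjoint_left]
      intro u hu1 hu2
      exact ((hmemMF u).1 hu2).2 ((hmemNF u).1 hu1)
    have hv' : v ∉ NF ∪ MF := by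
      rw [Finset.mem_union]
      rintro (h | h)
      · exact hvNF h
      · exact ((hmemMF v).1 h).1 rfl
    have := congrArg Finset.card hu
    rw [Finset.card_insert_of_notMem hv', Finset.card_union_of_disjoint hd,
      Finset.card_univ] at this
    omega
  have hMclq : ∀ m ∈ MF, ∀ m' ∈ MF, m ≠ m' → G.Adj m m' := by
    intro m hm m' hm' hne
    by_contra hna
    obtain ⟨hmv, hmadj⟩ := (hmemMF m).1 hm
    obtain ⟨hmv', hmadj'⟩ := (hmemMF m').1 hm'
    exact htri v m m' (Ne.symm hmv) (Ne.symm hmv') hne hmadj hmadj' hna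
  -- Part 1
  have part1 : ¬ G.IsClique (G.neighborSet v) := by
    intro hclq
    have hC1 : G.IsClique (↑(insert v NF) : Set V) := by
      intro a ha b hb hab
      simp only [Finset.coe_insert, Set.mem_insert_iff, Finset.mem_coe] at ha hb
      rw [hmemNF] at ha hb  -- may fail; handle below
      rcases ha with rfl | ha <;> rcases hb with rfl | hb
      · exact absurd rfl hab
      · exact hb
      · exact ha.symm
      · exact hclq ha hb hab
    have hC2 : G.IsClique (↑MF : Set V) := by
      intro a ha b hb hab
      exact hMclq a (Finset.mem_coe.1 ha) b (Finset.mem_coe.1 hb) hab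
    have hcard1 : (insert v NF).card = NF.card + 1 := Finset.card_insert_of_notMem hvNF
    rcases le_or_gt ((Fintype.card V + 1) / 2) (insert v NF).card with h | h
    · exact hNo (OddAux.hasOddKMinor_of_isClique _ hC1 h)
    · refine hNo (OddAux.hasOddKMinor_of_isClique _ hC2 ?_)
      omega
  -- a nonadjacent pair of neighbors
  obtain ⟨x, hx, y, hy, hxy, hnxy⟩ :
      ∃ x, G.Adj v x ∧ ∃ y, G.Adj v y ∧ x ≠ y ∧ ¬ G.Adj x y := by
    by_contra hcon
    push_neg at hcon
    exact part1 (fun a ha b hb hab => (hcon a ha b hb hab))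
  haveI : Fintype ↥(G.neighborSet v) := Fintype.ofFinite _
  have part2 : (G.induce (G.neighborSet v)).indepNum' = 2 := by
    have hle : (G.induce (G.neighborSet v))ᶜ.cliqueNum ≤ 2 := by
      obtain ⟨s, hs⟩ :=
        SimpleGraph.exists_isNClique_cliqueNum (G := (G.induce (G.neighborSet v))ᶜ)
      have himg : Gᶜ.IsClique
          (↑(s.image (Subtype.val : ↥(G.neighborSet v) → V)) : Set V) := by
        intro a ha b hb hab
        simp only [Finset.coe_image, Set.mem_image, Finset.mem_coe] at ha hb
        obtain ⟨⟨a0, ha0⟩, has, rfl⟩ := ha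
        obtain ⟨⟨b0, hb0⟩, hbs, rfl⟩ := hb
        have hne : (⟨a0, ha0⟩ : ↥(G.neighborSet v)) ≠ ⟨b0, hb0⟩ :=
          fun h => hab (congrArg Subtype.val h)
        have hadj := hs.1 has hbs hne
        rw [SimpleGraph.compl_adj] at hadj ⊢
        exact ⟨hab, fun h => hadj.2 h⟩
      have hsc : s.card ≤ Gᶜ.cliqueNum := by
        have hcard : (s.image Subtype.val).card = s.card :=
          Finset.card_image_of_injective _ Subtype.val_injective
        calc s.card = (s.image Subtype.val).card := hcard.symm
          _ ≤ Gᶜ.cliqueNum := SimpleGraph.IsClique.card_le_cliqueNum (tc := himg)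
      rw [← hs.2]
      omega
    have hge : 2 ≤ (G.induce (G.neighborSet v))ᶜ.cliqueNum := by
      have hxN : x ∈ G.neighborSet v := hx
      have hyN : y ∈ G.neighborSet v := hy
      have hpair : ((G.induce (G.neighborSet v))ᶜ).IsClique
          (↑({⟨x, hxN⟩, ⟨y, hyN⟩} : Finset ↥(G.neighborSet v)) : Set _) := by
        intro a ha b hb hab
        simp only [Finset.coe_insert, Finset.coe_singleton, Set.mem_insert_iff,
          Set.mem_singleton_iff] at ha hb
        rw [SimpleGraph.compl_adj]
        refine ⟨hab, ?_⟩
        rcases ha with rfl | rfl <;> rcases hb with rfl | rfl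
        · exact absurd rfl hab
        · exact fun h => hnxy h
        · exact fun h => hnxy (SimpleGraph.Adj.symm h)
        · exact absurd rfl hab
      have hcard : ({⟨x, hxN⟩, ⟨y, hyN⟩} : Finset ↥(G.neighborSet v)).card = 2 :=
        Finset.card_pair (fun h => hxy (congrArg Subtype.val h))
      calc (2 : ℕ) = _ := hcard.symm
        _ ≤ _ := SimpleGraph.IsClique.card_le_cliqueNum (tc := hpair)
    show (G.induce (G.neighborSet v))ᶜ.cliqueNum = 2
    omega
  have part3 : (G.induce (G.neighborSet v)).Connected := by
    by_contra hdis
    have hxNv : x ∈ G.neighborSet v := hx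
    set AS : Set V :=
      {u | ∃ h : u ∈ G.neighborSet v,
        (G.induce (G.neighborSet v)).Reachable ⟨x, hxNv⟩ ⟨u, h⟩} with hAS
    have hASsub : ∀ u ∈ AS, u ∈ G.neighborSet v := fun u hu => hu.1
    have hxAS : x ∈ AS := ⟨hxNv, SimpleGraph.Reachable.refl _⟩
    set AF : Finset V := Finset.univ.filter (· ∈ AS) with hAFdef
    set BF : Finset V := Finset.univ.filter (fun u => u ∈ G.neighborSet v ∧ u ∉ AS)
      with hBFdef
    have hmemAF : ∀ u, u ∈ AF ↔ u ∈ AS := by intro u; simp [hAFdef]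
    have hmemBF : ∀ u, u ∈ BF ↔ (u ∈ G.neighborSet v ∧ u ∉ AS) := by
      intro u; simp [hBFdef]
    have hAFN : ∀ u ∈ AF, G.Adj v u := fun u hu => hASsub u ((hmemAF u).1 hu)
    have hBFN : ∀ u ∈ BF, G.Adj v u := fun u hu => ((hmemBF u).1 hu).1
    have hxAF : x ∈ AF := (hmemAF x).2 hxAS
    have hBFne : BF.Nonempty := by
      rw [Finset.nonempty_iff_ne_empty]
      intro hempty
      apply hdis
      have hall : ∀ w : ↥(G.neighborSet v),
          (G.induce (G.neighborSet v)).Reachable ⟨x, hxNv⟩ w := by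
        rintro ⟨u, hu⟩
        by_contra hru
        have huB : u ∈ BF := (hmemBF u).2 ⟨hu, fun hAS' => hru hAS'.2⟩
        rw [hempty] at huB
        exact absurd huB (Finset.notMem_empty u)
      haveI : Nonempty ↥(G.neighborSet v) := ⟨⟨x, hxNv⟩⟩
      exact ⟨fun a b => (hall a).symm.trans (hall b)⟩
    have hABnadj : ∀ a ∈ AF, ∀ b ∈ BF, ¬ G.Adj a b := by
      intro a ha b hb hadj
      obtain ⟨haN, hra⟩ := (hmemAF a).1 ha
      obtain ⟨hbN, hbAS⟩ := (hmemBF b).1 hb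
      refine hbAS ⟨hbN, hra.trans (SimpleGraph.Adj.reachable ?_)⟩
      exact hadj
    have hABne : ∀ a ∈ AF, ∀ b ∈ BF, a ≠ b := by
      intro a ha b hb h
      subst h
      exact ((hmemBF a).1 hb).2 ((hmemAF a).1 ha)
    -- M sets
    set MAF : Finset V := MF.filter (fun m => ∀ a ∈ AF, G.Adj m a) with hMAFdef
    set MBF : Finset V := MF \ MAF with hMBFdef
    have hMAFsub : MAF ⊆ MF := Finset.filter_subset _ _
    have hMBFsub : MBF ⊆ MF := Finset.sdiff_subset
    have hMnonadj : ∀ m ∈ MF, ¬ G.Adj v m := fun m hm => ((hmemMF m).1 hm).2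
    have hMneN : ∀ m ∈ MF, ∀ u, G.Adj v u → m ≠ u := by
      intro m hm u hu h
      exact hMnonadj m hm (h ▸ hu)
    have hMAA : ∀ m ∈ MAF, ∀ a ∈ AF, G.Adj m a := by
      intro m hm
      exact (Finset.mem_filter.1 hm).2
    have hMBB : ∀ m ∈ MBF, ∀ b ∈ BF, G.Adj m b := by
      intro m hm b hb
      have hmMF : m ∈ MF := hMBFsub hm
      have hnot : ¬ (∀ a ∈ AF, G.Adj m a) := by
        intro hallA
        exact (Finset.mem_sdiff.1 hm).2 (Finset.mem_filter.2 ⟨hmMF, hallA⟩)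
      push_neg at hnot
      obtain ⟨a, ha, hna⟩ := hnot
      by_contra hnb
      exact htri m a b (hMneN m hmMF a (hAFN a ha)) (hMneN m hmMF b (hBFN b hb))
        (hABne a ha b hb) hna hnb (hABnadj a ha b hb)
    have hAclq : ∀ a ∈ AF, ∀ a' ∈ AF, a ≠ a' → G.Adj a a' := by
      intro a ha a' ha' hne
      by_contra hna
      obtain ⟨b0, hb0⟩ := hBFne
      exact htri a a' b0 hne (hABne a ha b0 hb0) (hABne a' ha' b0 hb0) hna
        (hABnadj a ha b0 hb0) (hABnadj a' ha' b0 hb0)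
    have hBclq : ∀ b ∈ BF, ∀ b' ∈ BF, b ≠ b' → G.Adj b b' := by
      intro b hb b' hb' hne
      by_contra hnb
      exact htri x b b' (hABne x hxAF b hb) (hABne x hxAF b' hb') hne
        (hABnadj x hxAF b hb) (hABnadj x hxAF b' hb') hnb
    -- disjointness facts
    have hvAF : v ∉ AF := fun h => (G.irrefl (hAFN v h))
    have hvBF : v ∉ BF := fun h => (G.irrefl (hBFN v h))
    have hvMF : v ∉ MF := fun h => ((hmemMF v).1 h).1 rfl
    have hvMAF : v ∉ MAF := fun h => hvMF (hMAFsub h)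
    have hvMBF : v ∉ MBF := fun h => hvMF (hMBFsub h)
    have hdAB : Disjoint AF BF := by
      rw [Finset.disjoint_left]
      intro u hu hu'
      exact ((hmemBF u).1 hu').2 ((hmemAF u).1 hu)
    have hdNM : ∀ (S T : Finset V), (∀ u ∈ S, G.Adj v u) → T ⊆ MF → Disjoint S T := by
      intro S T hS hT
      rw [Finset.disjoint_left]
      intro u hu hu'
      exact hMnonadj u (hT hu') (hS u hu)
    have hdAMA : Disjoint AF MAF := hdNM _ _ hAFN hMAFsub
    have hdAMB : Disjoint AF MBF := hdNM _ _ hAFN hMBFsub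
    have hdBMA : Disjoint BF MAF := hdNM _ _ hBFN hMAFsub
    have hdBMB : Disjoint BF MBF := hdNM _ _ hBFN hMBFsub
    have hdMAMB : Disjoint MAF MBF := Finset.disjoint_sdiff
    -- cardinalities
    have hABcard : AF.card + BF.card = NF.card := by
      have hun : AF ∪ BF = NF := by
        ext u
        rw [Finset.mem_union, hmemAF, hmemBF, hmemNF]
        constructor
        · rintro (h | h)
          · exact hASsub u h
          · exact h.1
        · intro h
          by_cases hAS' : u ∈ AS
          · exact Or.inl hAS'
          · exact Or.inr ⟨h, hAS'⟩
      rw [← Finset.card_union_of_disjoint hdAB, hun]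
    have hMcard : MAF.card + MBF.card = MF.card := by
      rw [hMBFdef, Finset.card_sdiff_of_subset hMAFsub]
      have := Finset.card_le_card hMAFsub
      omega
    have hMclq' : ∀ m, (m ∈ MAF ∨ m ∈ MBF) → ∀ m', (m' ∈ MAF ∨ m' ∈ MBF) →
        m ≠ m' → G.Adj m m' := by
      intro m hm m' hm' hne
      have h1 : m ∈ MF := by rcases hm with h | h; exacts [hMAFsub h, hMBFsub h]
      have h2 : m' ∈ MF := by rcases hm' with h | h; exacts [hMAFsub h, hMBFsub h]
      exact hMclq m h1 m' h2 hne
    -- case analysis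
    by_cases h1 : (Fintype.card V + 1) / 2 ≤ AF.card + MAF.card
    · have hC : G.IsClique (↑(AF ∪ MAF) : Set V) := by
        intro a ha b hb hab
        rw [Finset.mem_coe, Finset.mem_union] at ha hb
        rcases ha with ha | ha <;> rcases hb with hb | hb
        · exact hAclq a ha b hb hab
        · exact (hMAA b hb a ha).symm
        · exact hMAA a ha b hb
        · exact hMclq a (hMAFsub ha) b (hMAFsub hb) hab
      refine hNo (OddAux.hasOddKMinor_of_isClique _ hC ?_)
      rw [Finset.card_union_of_disjoint hdAMA]
      exact h1
    by_cases h2 : (Fintype.card V + 1) / 2 ≤ BF.card + MBF.card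
    · have hC : G.IsClique (↑(BF ∪ MBF) : Set V) := by
        intro a ha b hb hab
        rw [Finset.mem_coe, Finset.mem_union] at ha hb
        rcases ha with ha | ha <;> rcases hb with hb | hb
        · exact hBclq a ha b hb hab
        · exact (hMBB b hb a ha).symm
        · exact hMBB a ha b hb
        · exact hMclq a (hMBFsub ha) b (hMBFsub hb) hab
      refine hNo (OddAux.hasOddKMinor_of_isClique _ hC ?_)
      rw [Finset.card_union_of_disjoint hdBMB]
      exact h2
    by_cases h3 : MAF.card ≤ MBF.card
    · refine hNo (construction v AF BF MAF MBF hvAF hvBF hvMAF hvMBF hdAB hdAMA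
        hdAMB hdBMA hdBMB hdMAMB hAFN hBFN hAclq hMclq' hMAA hMBB hBFne h3 ?_)
      omega
    · refine hNo (construction v BF AF MBF MAF hvBF hvAF hvMBF hvMAF hdAB.symm
        hdBMB hdBMA hdAMB hdAMA hdMAMB.symm hBFN hAFN hBclq
        (fun m hm m' hm' => hMclq' m hm.symm m' hm'.symm) hMBB hMAA
        ⟨x, hxAF⟩ (by omega) ?_)
      omega
  exact ⟨part1, part2, part3⟩
end
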